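/- arXiv:1901.09094 — 6 statements merged into one kernel-verified Lean document; each statement's English description precedes it below -/
import Mathlib

section
/- Let $\{Z_j\}_{j=1}^\infty$ be a stochastic process adapted to a filtration $\{\mathcal{F}_j\}_{j=-1}^\infty$, let $N > 0$ be an even integer, and suppose $0 \le Z_j \le B$ almost surely and $\mathrm{E}[Z_j \mid \mathcal{F}_{j-2}] \le m$ almost surely for all $j \ge 1$. Then for any $\lambda \ge 2Nm$, $\Pr\left(\sum_{j=1}^N Z_j \ge \lambda\right) \le 2\exp\left(-\frac{3\lambda}{32B}\right)$. -/
open MeasureTheory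
open scoped ENNReal


lemma exp_le_one_add (B : ℝ) (hB : 0 < B) (z : ℝ) (h0 : 0 ≤ z) (h1 : z ≤ B) :
    Real.exp (Real.log 2 / B * z) ≤ 1 + z / B := by
  have ha : 0 ≤ z / B := div_nonneg h0 hB.le
  have hb : z / B ≤ 1 := (div_le_one hB).2 h1
  have := convexOn_exp.2 (Set.mem_univ (0:ℝ)) (Set.mem_univ (Real.log 2))
    (by linarith : (0:ℝ) ≤ 1 - z / B) ha (by ring)
  simp only [smul_eq_mul, mul_zero, zero_add, Real.exp_zero, mul_one,
    Real.exp_log two_pos] at this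
  calc Real.exp (Real.log 2 / B * z) = Real.exp (z / B * Real.log 2) := by ring_nf
    _ ≤ (1 - z / B) * 1 + z / B * 2 := by simpa using this
    _ = 1 + z / B := by ring

lemma exp_le_two (B : ℝ) (hB : 0 < B) (z : ℝ) (h0 : 0 ≤ z) (h1 : z ≤ B) :
    Real.exp (Real.log 2 / B * z) ≤ 2 := by
  have h := exp_le_one_add B hB z h0 h1
  have : z / B ≤ 1 := (div_le_one hB).2 h1
  linarith

lemma prod_exp_bound {Ω : Type*} [m0 : MeasurableSpace Ω] (μ : Measure Ω)
    [IsProbabilityMeasure μ] (ℱ : Filtration ℤ m0) (Z : ℤ → Ω → ℝ)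
    (hadapted : ∀ j : ℤ, 1 ≤ j → StronglyMeasurable[ℱ j] (Z j))
    (B m : ℝ) (hB : 0 < B) (hm : 0 < m)
    (hbdd : ∀ j : ℤ, 1 ≤ j → ∀ᵐ ω ∂μ, 0 ≤ Z j ω ∧ Z j ω ≤ B)
    (hcond : ∀ j : ℤ, 1 ≤ j → ∀ᵐ ω ∂μ, (μ[Z j | ℱ (j - 2)]) ω ≤ m)
    (f : ℕ → ℤ) (hf1 : ∀ i, 1 ≤ i → 1 ≤ f i) (hgap : ∀ i, f i + 2 ≤ f (i + 1))
    (k : ℕ) :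
    ∫ ω, ∏ i ∈ Finset.Icc 1 k, Real.exp (Real.log 2 / B * Z (f i) ω) ∂μ
      ≤ Real.exp (m / B) ^ k := by
  have hmono : Monotone f := monotone_nat_of_le_succ (fun i => by linarith [hgap i])
  set t := Real.log 2 / B with ht_def
  have ht : 0 ≤ t := div_nonneg (Real.log_nonneg one_le_two) hB.le
  -- measurability of each factor w.r.t. the ambient σ-algebra
  have hZmeas : ∀ i : ℕ, 1 ≤ i → StronglyMeasurable (Z (f i)) :=
    fun i hi => (hadapted (f i) (hf1 i hi)).mono (ℱ.le _)
  induction k with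
  | zero => simp
  | succ k ih =>
    set j : ℤ := f (k + 1) with hj_def
    have hj1 : 1 ≤ j := hf1 (k+1) (by omega)
    have hG : (ℱ (j - 2) : MeasurableSpace Ω) ≤ m0 := ℱ.le _
    set P : Ω → ℝ := fun ω => ∏ i ∈ Finset.Icc 1 k, Real.exp (t * Z (f i) ω) with hP_def
    set Y : Ω → ℝ := fun ω => Real.exp (t * Z j ω) with hY_def
    -- P is G-strongly measurable
    have hPm : StronglyMeasurable[ℱ (j - 2)] P := by
      apply Finset.stronglyMeasurable_fun_prod
      intro i hi
      obtain ⟨hi1, hik⟩ := Finset.mem_Icc.1 hi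
      have hle : ℱ (f i) ≤ ℱ (j - 2) := ℱ.mono (by
        have h1 : f i ≤ f k := hmono hik
        have h2 := hgap k
        omega)
      exact Real.continuous_exp.comp_stronglyMeasurable
        (((hadapted (f i) (hf1 i hi1)).mono hle).const_mul t)
    have hPm0 : StronglyMeasurable P := hPm.mono hG
    have hYm : StronglyMeasurable Y :=
      Real.continuous_exp.comp_stronglyMeasurable ((hZmeas (k+1) (by omega)).const_mul t)
    -- a.e. bounds on all the Z's involved
    have hbdall : ∀ᵐ ω ∂μ, ∀ i, i ∈ (Finset.Icc 1 (k+1) : Finset ℕ) →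
        0 ≤ Z (f i) ω ∧ Z (f i) ω ≤ B := by
      rw [ae_all_iff]
      intro i
      by_cases hi : i ∈ (Finset.Icc 1 (k+1) : Finset ℕ)
      · filter_upwards [hbdd (f i) (hf1 i (Finset.mem_Icc.1 hi).1)] with ω hω _
        exact hω
      · filter_upwards with ω h
        exact absurd h hi
    -- pointwise nonnegativity of P
    have hP0 : ∀ ω, 0 ≤ P ω := fun ω => Finset.prod_nonneg fun i _ => (Real.exp_pos _).le
    -- a.e. bound P ≤ 2^k
    have hPbd : ∀ᵐ ω ∂μ, P ω ≤ 2 ^ k := by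
      filter_upwards [hbdall] with ω hω
      calc P ω ≤ ∏ i ∈ Finset.Icc 1 k, (2:ℝ) := by
            apply Finset.prod_le_prod (fun i _ => (Real.exp_pos _).le)
            intro i hi
            obtain ⟨hi1, hik⟩ := Finset.mem_Icc.1 hi
            obtain ⟨h0, h1⟩ := hω i (Finset.mem_Icc.2 ⟨hi1, by omega⟩)
            exact exp_le_two B hB _ h0 h1
        _ = 2 ^ k := by simp [Nat.card_Icc]
    have hYbd : ∀ᵐ ω ∂μ, Y ω ≤ 2 := by
      filter_upwards [hbdd j hj1] with ω hω
      exact exp_le_two B hB _ hω.1 hω.2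
    have hY1 : ∀ ω, 0 ≤ Y ω := fun ω => (Real.exp_pos _).le
    -- integrability
    have hP_int : Integrable P μ := by
      refine (integrable_const ((2:ℝ)^k)).mono' hPm0.aestronglyMeasurable ?_
      filter_upwards [hPbd] with ω hω
      rw [Real.norm_eq_abs, abs_of_nonneg (hP0 ω)]; exact hω
    have hY_int : Integrable Y μ := by
      refine (integrable_const (2:ℝ)).mono' hYm.aestronglyMeasurable ?_
      filter_upwards [hYbd] with ω hω
      rw [Real.norm_eq_abs, abs_of_nonneg (hY1 ω)]; exact hω
    have hPY_int : Integrable (P * Y) μ := by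
      refine (integrable_const ((2:ℝ)^(k+1))).mono'
        (hPm0.mul hYm).aestronglyMeasurable ?_
      filter_upwards [hPbd, hYbd] with ω h1 h2
      rw [Pi.mul_apply, Real.norm_eq_abs, abs_of_nonneg (mul_nonneg (hP0 ω) (hY1 ω))]
      calc P ω * Y ω ≤ 2^k * 2 := by
            apply mul_le_mul h1 h2 (hY1 ω) (by positivity)
        _ = 2^(k+1) := by ring
    -- Z j integrable
    have hZj_int : Integrable (Z j) μ := by
      refine (integrable_const B).mono'
        (hZmeas (k+1) (by omega)).aestronglyMeasurable ?_
      filter_upwards [hbdd j hj1] with ω hω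
      rw [Real.norm_eq_abs, abs_of_nonneg hω.1]; exact hω.2
    -- conditional expectation bound on Y
    have hY_cond : (μ[Y | ℱ (j - 2)]) ≤ᵐ[μ] fun _ => Real.exp (m / B) := by
      have hY' : Integrable (fun ω => 1 + B⁻¹ * Z j ω) μ :=
        (integrable_const 1).add (hZj_int.const_mul B⁻¹)
      have hle : Y ≤ᵐ[μ] fun ω => 1 + B⁻¹ * Z j ω := by
        filter_upwards [hbdd j hj1] with ω hω
        have h := exp_le_one_add B hB _ hω.1 hω.2
        rw [div_eq_inv_mul (Z j ω) B] at h
        exact h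
      have h1 : μ[Y | ℱ (j - 2)] ≤ᵐ[μ] μ[fun ω => 1 + B⁻¹ * Z j ω | ℱ (j - 2)] :=
        condExp_mono hY_int hY' hle
      have h2 : μ[fun ω => 1 + B⁻¹ * Z j ω | ℱ (j - 2)]
          =ᵐ[μ] (fun _ => (1:ℝ)) + B⁻¹ • μ[Z j | ℱ (j - 2)] := by
        have : (fun ω => 1 + B⁻¹ * Z j ω) = (fun _ => (1:ℝ)) + B⁻¹ • (Z j) := by
          funext ω; simp [smul_eq_mul]
        rw [this]
        refine (condExp_add (integrable_const 1) (hZj_int.smul B⁻¹) _).trans ?_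
        filter_upwards [condExp_smul (μ := μ) (m := (ℱ (j - 2) : MeasurableSpace Ω)) B⁻¹ (Z j)] with ω hω
        simp only [Pi.add_apply, hω, condExp_const hG]
      filter_upwards [h1, h2, hcond j hj1] with ω hw1 hw2 hw3
      have : (μ[Z j | ℱ (j - 2)]) ω ≤ m := hw3
      have hln := Real.add_one_le_exp (m / B)
      have hBinv : 0 ≤ B⁻¹ := by positivity
      calc (μ[Y| ℱ (j - 2)]) ω ≤ 1 + B⁻¹ * (μ[Z j | ℱ (j - 2)]) ω := by simpa using hw1.trans_eq hw2
        _ ≤ 1 + B⁻¹ * m := by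
            have : (μ[Z j | ℱ (j - 2)]) ω ≤ m := hw3
            nlinarith
        _ ≤ Real.exp (m / B) := by rw [div_eq_inv_mul] at hln ⊢; linarith
    -- the main chain
    have hcongr : (fun ω => ∏ i ∈ Finset.Icc 1 (k+1), Real.exp (t * Z (f i) ω))
        = P * Y := by
      funext ω
      rw [Pi.mul_apply, hP_def, hY_def]
      exact Finset.prod_Icc_succ_top (by omega) _
    have hpull : μ[P * Y | ℱ (j - 2)] =ᵐ[μ] P * μ[Y | ℱ (j - 2)] :=
      condExp_mul_of_stronglyMeasurable_left hPm hPY_int hY_int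
    have hPcond_int : Integrable (P * μ[Y | ℱ (j - 2)]) μ := integrable_condExp.congr hpull
    calc ∫ ω, ∏ i ∈ Finset.Icc 1 (k+1), Real.exp (t * Z (f i) ω) ∂μ
        = ∫ ω, (P * Y) ω ∂μ := by rw [hcongr]
      _ = ∫ ω, (μ[P * Y | ℱ (j - 2)]) ω ∂μ := (integral_condExp hG).symm
      _ = ∫ ω, (P * μ[Y | ℱ (j - 2)]) ω ∂μ := integral_congr_ae hpull
      _ ≤ ∫ ω, P ω * Real.exp (m / B) ∂μ := by
          apply integral_mono_ae hPcond_int (hP_int.mul_const _)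
          filter_upwards [hY_cond] with ω hω
          exact mul_le_mul_of_nonneg_left hω (hP0 ω)
      _ = (∫ ω, P ω ∂μ) * Real.exp (m / B) := integral_mul_const _ _
      _ ≤ Real.exp (m / B) ^ k * Real.exp (m / B) := by
          exact mul_le_mul_of_nonneg_right ih (Real.exp_pos _).le
      _ = Real.exp (m / B) ^ (k+1) := (pow_succ _ _).symm

lemma split_sum (g : ℤ → ℝ) (n : ℕ) :
    ∑ j ∈ Finset.Icc (1:ℤ) (2*n), g j =
      (∑ i ∈ Finset.Icc (1:ℕ) n, g (2*i-1)) + ∑ i ∈ Finset.Icc (1:ℕ) n, g (2*i) := by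
  induction n with
  | zero => simp
  | succ n ih =>
    have h1 : Finset.Icc (1:ℤ) (2*(n+1:ℕ)) =
        insert (2*(n:ℤ)+2) (insert (2*(n:ℤ)+1) (Finset.Icc (1:ℤ) (2*n))) := by
      ext j; simp only [Finset.mem_Icc, Finset.mem_insert]; push_cast; omega
    have h2 : (2*(n:ℤ)+2) ∉ insert (2*(n:ℤ)+1) (Finset.Icc (1:ℤ) (2*n)) := by
      simp only [Finset.mem_Icc, Finset.mem_insert]; omega
    have h3 : (2*(n:ℤ)+1) ∉ Finset.Icc (1:ℤ) (2*n) := by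
      simp only [Finset.mem_Icc]; omega
    rw [h1, Finset.sum_insert h2, Finset.sum_insert h3, ih,
      Finset.sum_Icc_succ_top (by omega : 1 ≤ n+1), Finset.sum_Icc_succ_top (by omega : 1 ≤ n+1)]
    push_cast
    have harg : ∀ x : ℕ, (2*(x:ℤ)-1) = -1 + (x:ℤ)*2 := fun x => by ring
    simp only [harg]
    ring

lemma class_tail {Ω : Type*} [m0 : MeasurableSpace Ω] (μ : Measure Ω)
    [IsProbabilityMeasure μ] (ℱ : Filtration ℤ m0) (Z : ℤ → Ω → ℝ)
    (hadapted : ∀ j : ℤ, 1 ≤ j → StronglyMeasurable[ℱ j] (Z j))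
    (B m : ℝ) (hB : 0 < B) (hm : 0 < m)
    (hbdd : ∀ j : ℤ, 1 ≤ j → ∀ᵐ ω ∂μ, 0 ≤ Z j ω ∧ Z j ω ≤ B)
    (hcond : ∀ j : ℤ, 1 ≤ j → ∀ᵐ ω ∂μ, (μ[Z j | ℱ (j - 2)]) ω ≤ m)
    (f : ℕ → ℤ) (hf1 : ∀ i, 1 ≤ i → 1 ≤ f i) (hgap : ∀ i, f i + 2 ≤ f (i + 1))
    (n : ℕ) (ε : ℝ) :
    (μ {ω | ε ≤ ∑ i ∈ Finset.Icc 1 n, Z (f i) ω}).toReal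
      ≤ Real.exp (-(Real.log 2 / B) * ε) * Real.exp (m / B) ^ n := by
  set t := Real.log 2 / B with ht_def
  have ht : 0 ≤ t := div_nonneg (Real.log_nonneg one_le_two) hB.le
  set X : Ω → ℝ := fun ω => ∑ i ∈ Finset.Icc 1 n, Z (f i) ω with hX
  have hexp : ∀ ω, Real.exp (t * X ω) = ∏ i ∈ Finset.Icc 1 n,
      Real.exp (t * Z (f i) ω) := by
    intro ω
    rw [hX, Finset.mul_sum, Real.exp_sum]
  have hbdall : ∀ᵐ ω ∂μ, ∀ i, i ∈ (Finset.Icc 1 n : Finset ℕ) →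
      0 ≤ Z (f i) ω ∧ Z (f i) ω ≤ B := by
    rw [ae_all_iff]
    intro i
    by_cases hi : i ∈ (Finset.Icc 1 n : Finset ℕ)
    · filter_upwards [hbdd (f i) (hf1 i (Finset.mem_Icc.1 hi).1)] with ω hω _
      exact hω
    · filter_upwards with ω h
      exact absurd h hi
  have hXm : StronglyMeasurable (fun ω => Real.exp (t * X ω)) := by
    have hXsm : StronglyMeasurable X :=
      Finset.stronglyMeasurable_fun_sum _ (fun i hi =>
        (hadapted (f i) (hf1 i (Finset.mem_Icc.1 hi).1)).mono (ℱ.le _))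
    exact Real.continuous_exp.comp_stronglyMeasurable (hXsm.const_mul t)
  have hint : Integrable (fun ω => Real.exp (t * X ω)) μ := by
    refine (integrable_const ((2:ℝ)^n)).mono' hXm.aestronglyMeasurable ?_
    filter_upwards [hbdall] with ω hω
    rw [Real.norm_eq_abs, abs_of_nonneg (Real.exp_pos _).le, hexp ω]
    calc ∏ i ∈ Finset.Icc 1 n, Real.exp (t * Z (f i) ω)
        ≤ ∏ i ∈ Finset.Icc 1 n, (2:ℝ) := by
          apply Finset.prod_le_prod (fun i _ => (Real.exp_pos _).le)
          intro i hi
          obtain ⟨h0, h1⟩ := hω i hi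
          exact exp_le_two B hB _ h0 h1
      _ = 2 ^ n := by simp [Nat.card_Icc]
  have h1 := ProbabilityTheory.measure_ge_le_exp_mul_mgf (X := X) (μ := μ) ε ht hint
  have h2 : ProbabilityTheory.mgf X μ t ≤ Real.exp (m / B) ^ n := by
    rw [ProbabilityTheory.mgf]
    calc ∫ ω, Real.exp (t * X ω) ∂μ
        = ∫ ω, ∏ i ∈ Finset.Icc 1 n, Real.exp (t * Z (f i) ω) ∂μ := by
          exact integral_congr_ae (Filter.Eventually.of_forall hexp)
      _ ≤ Real.exp (m / B) ^ n :=
          prod_exp_bound μ ℱ Z hadapted B m hB hm hbdd hcond f hf1 hgap n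
  calc (μ {ω | ε ≤ X ω}).toReal
      ≤ Real.exp (-t * ε) * ProbabilityTheory.mgf X μ t := h1
    _ ≤ Real.exp (-t * ε) * Real.exp (m / B) ^ n :=
        mul_le_mul_of_nonneg_left h2 (Real.exp_pos _).le

/-- a Bernstein-type inequality for a nonnegative bounded process adapted
to a filtration indexed from `-1`, whose conditional mean given the σ-algebra two
steps back is at most `m`. -/
theorem bernstein_two_step (Ω : Type*) [m0 : MeasurableSpace Ω] (μ : Measure Ω)
    [IsProbabilityMeasure μ] (ℱ : Filtration ℤ m0) (Z : ℤ → Ω → ℝ)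
    (hadapted : ∀ j : ℤ, 1 ≤ j → StronglyMeasurable[ℱ j] (Z j))
    (B m : ℝ) (hB : 0 < B) (hm : 0 < m) (N : ℕ) (hN : 0 < N) (hNeven : Even N)
    (hbdd : ∀ j : ℤ, 1 ≤ j → ∀ᵐ ω ∂μ, 0 ≤ Z j ω ∧ Z j ω ≤ B)
    (hcond : ∀ j : ℤ, 1 ≤ j → ∀ᵐ ω ∂μ, (μ[Z j | ℱ (j - 2)]) ω ≤ m)
    (lam : ℝ) (hlam : 2 * N * m ≤ lam) :
    μ {ω | lam ≤ ∑ j ∈ Finset.Icc (1 : ℤ) (N : ℤ), Z j ω}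
      ≤ ENNReal.ofReal (2 * Real.exp (-(3 * lam) / (32 * B))) := by
  obtain ⟨n, hn⟩ := hNeven
  have hn1 : 1 ≤ n := by omega
  have hNcast : ((N : ℕ) : ℤ) = 2 * (n : ℤ) := by push_cast [hn]; ring
  have hlam0 : 0 < lam := by
    have h1 : (1:ℝ) ≤ (N:ℝ) := by exact_mod_cast hN
    nlinarith
  have hnm : (n:ℝ) * m ≤ lam / 4 := by
    have hNr : (N:ℝ) = 2 * (n:ℝ) := by push_cast [hn]; ring
    rw [hNr] at hlam
    linarith
  -- the two subsequences
  have hfo1 : ∀ i : ℕ, 1 ≤ i → 1 ≤ 2*(i:ℤ)-1 := by intro i hi; omega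
  have hfogap : ∀ i : ℕ, (2*(i:ℤ)-1) + 2 ≤ 2*((i+1:ℕ):ℤ)-1 := by intro i; push_cast; ring_nf; omega
  have hfe1 : ∀ i : ℕ, 1 ≤ i → 1 ≤ 2*(i:ℤ) := by intro i hi; omega
  have hfegap : ∀ i : ℕ, 2*(i:ℤ) + 2 ≤ 2*((i+1:ℕ):ℤ) := by intro i; push_cast; ring_nf; omega
  have hEo := class_tail μ ℱ Z hadapted B m hB hm hbdd hcond
    (fun i : ℕ => 2*(i:ℤ)-1) hfo1 hfogap n (lam/2)
  have hEe := class_tail μ ℱ Z hadapted B m hB hm hbdd hcond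
    (fun i : ℕ => 2*(i:ℤ)) hfe1 hfegap n (lam/2)
  -- numeric bound
  have hkey : Real.exp (-(Real.log 2 / B) * (lam/2)) * Real.exp (m/B) ^ n
      ≤ Real.exp (-(3*lam)/(32*B)) := by
    rw [← Real.exp_nat_mul, ← Real.exp_add, Real.exp_le_exp]
    have e1 : -(Real.log 2 / B)*(lam/2) + (n:ℝ)*(m/B)
        = (-(Real.log 2)*(lam/2) + (n:ℝ)*m)/B := by field_simp
    have e2 : -(3*lam)/(32*B) = (-(3*lam)/32)/B := by ring
    rw [e1, e2]
    gcongr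
    have hml : lam * 0.6875 ≤ lam * Real.log 2 :=
      mul_le_mul_of_nonneg_left
        (le_of_lt (lt_trans (by norm_num) Real.log_two_gt_d9)) hlam0.le
    linarith
  have hU1 : μ {ω | lam/2 ≤ ∑ i ∈ Finset.Icc 1 n, Z (2*(i:ℤ)-1) ω}
      ≤ ENNReal.ofReal (Real.exp (-(3*lam)/(32*B))) := by
    rw [← ENNReal.ofReal_toReal (measure_ne_top μ _)]
    exact ENNReal.ofReal_le_ofReal (hEo.trans hkey)
  have hU2 : μ {ω | lam/2 ≤ ∑ i ∈ Finset.Icc 1 n, Z (2*(i:ℤ)) ω}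
      ≤ ENNReal.ofReal (Real.exp (-(3*lam)/(32*B))) := by
    rw [← ENNReal.ofReal_toReal (measure_ne_top μ _)]
    exact ENNReal.ofReal_le_ofReal (hEe.trans hkey)
  have hsub : {ω | lam ≤ ∑ j ∈ Finset.Icc (1 : ℤ) (N : ℤ), Z j ω} ⊆
      {ω | lam/2 ≤ ∑ i ∈ Finset.Icc 1 n, Z (2*(i:ℤ)-1) ω} ∪
      {ω | lam/2 ≤ ∑ i ∈ Finset.Icc 1 n, Z (2*(i:ℤ)) ω} := by
    intro ω hω
    simp only [Set.mem_setOf_eq, Set.mem_union] at *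
    by_contra hcon
    push_neg at hcon
    have hsplit := split_sum (fun j => Z j ω) n
    rw [hNcast] at hω
    rw [hsplit] at hω
    linarith [hcon.1, hcon.2]
  calc μ {ω | lam ≤ ∑ j ∈ Finset.Icc (1 : ℤ) (N : ℤ), Z j ω}
      ≤ μ ({ω | lam/2 ≤ ∑ i ∈ Finset.Icc 1 n, Z (2*(i:ℤ)-1) ω} ∪
          {ω | lam/2 ≤ ∑ i ∈ Finset.Icc 1 n, Z (2*(i:ℤ)) ω}) := measure_mono hsub
    _ ≤ μ {ω | lam/2 ≤ ∑ i ∈ Finset.Icc 1 n, Z (2*(i:ℤ)-1) ω} +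
        μ {ω | lam/2 ≤ ∑ i ∈ Finset.Icc 1 n, Z (2*(i:ℤ)) ω} := measure_union_le _ _
    _ ≤ ENNReal.ofReal (Real.exp (-(3*lam)/(32*B))) +
        ENNReal.ofReal (Real.exp (-(3*lam)/(32*B))) := add_le_add hU1 hU2
    _ = ENNReal.ofReal (2 * Real.exp (-(3*lam)/(32*B))) := by
        rw [two_mul, ENNReal.ofReal_add (Real.exp_nonneg _) (Real.exp_nonneg _)]
end

section
/- Let $\{X_j\}_{j \in \mathbb{N}}$ be an irreducible Markov chain on a countable state space $\mathcal{S}$. Suppose there exist a function $V : \mathcal{S} \to \mathbb{R}_+$, positive integers $1 \le L < K$, a finite set $B \subset \mathcal{S}$, $\epsilon > 0$, and $A < \infty$ such that: (i) $\mathrm{E}[V(X_{k+1})] < \infty$ whenever $\mathrm{E}[V(X_k)] < \infty$; (ii) $\mathrm{E}[V(X_{k+K}) - V(X_{k+L}) \mid X_k = x] \le -\epsilon + A \mathbb{1}_B(x)$ for all $x \in \mathcal{S}$. Then the chain is positive recurrent. -/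
open scoped ENNReal
open Finset Filter

section MarkovChain

variable {S : Type*}

/-- `P` is a Markov transition kernel on the state space `S`. -/
def IsTransKernel (P : S → S → ℝ≥0∞) : Prop := ∀ x, ∑' y, P x y = 1

/-- `n`-step transition probabilities of the time-homogeneous chain with kernel `P`. -/
noncomputable def stepN (P : S → S → ℝ≥0∞) : ℕ → S → S → ℝ≥0∞
  | 0 => fun x y => by classical exact if x = y then 1 else 0
  | n + 1 => fun x y => ∑' z, P x z * stepN P n z y

/-- The chain is irreducible: every state can reach every other state. -/
def MCIrreducible (P : S → S → ℝ≥0∞) : Prop := ∀ x y : S, ∃ n : ℕ, stepN P n x y ≠ 0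

/-- `firstHit P x n z`: the probability that the chain started at `z` first hits `x`
at time exactly `n`. -/
noncomputable def firstHit (P : S → S → ℝ≥0∞) (x : S) : ℕ → S → ℝ≥0∞
  | 0 => fun z => by classical exact if z = x then 1 else 0
  | n + 1 => fun z => by
      classical exact if z = x then 0 else ∑' w, P z w * firstHit P x n w

/-- `firstReturn P x n`: the probability that the chain started at `x` first returns
to `x` at time exactly `n ≥ 1`. -/
noncomputable def firstReturn (P : S → S → ℝ≥0∞) (x : S) : ℕ → ℝ≥0∞
  | 0 => 0
  | n + 1 => ∑' z, P x z * firstHit P x n z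

/-- The chain is positive recurrent: from every state, return is almost sure and the
expected return time is finite. -/
def MCPositiveRecurrent (P : S → S → ℝ≥0∞) : Prop :=
  ∀ x : S, (∑' n : ℕ, firstReturn P x n = 1) ∧
    (∑' n : ℕ, (n : ℝ≥0∞) * firstReturn P x n ≠ ⊤)

end MarkovChain

namespace FosterAux
variable {S : Type*}

/-- substochastic kernel -/
def SubStoch (Q : S → S → ℝ≥0∞) : Prop := ∀ x, ∑' y, Q x y ≤ 1

lemma IsTransKernel.subStoch {P : S → S → ℝ≥0∞} (hP : IsTransKernel P) : SubStoch P :=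
  fun x => le_of_eq (hP x)

/-- kernel killed at a state -/
noncomputable def kill (Q : S → S → ℝ≥0∞) (x₀ : S) : S → S → ℝ≥0∞ :=
  fun z w => by classical exact if z = x₀ then 0 else Q z w

lemma kill_self {Q : S → S → ℝ≥0∞} {x₀ : S} (w : S) : kill Q x₀ x₀ w = 0 := by
  simp [kill]

lemma kill_ne {Q : S → S → ℝ≥0∞} {x₀ z : S} (h : z ≠ x₀) (w : S) : kill Q x₀ z w = Q z w := by
  simp [kill, h]

lemma subStoch_kill {Q : S → S → ℝ≥0∞} (hQ : SubStoch Q) (x₀ : S) : SubStoch (kill Q x₀) := by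
  intro z
  by_cases h : z = x₀
  · subst h; simp [FosterAux.kill_self]
  · calc ∑' w, kill Q x₀ z w = ∑' w, Q z w := by
          exact tsum_congr fun w => kill_ne h w
      _ ≤ 1 := hQ z

lemma stepN_zero_self (Q : S → S → ℝ≥0∞) (x : S) : stepN Q 0 x x = 1 := by simp [stepN]

lemma stepN_zero_ne (Q : S → S → ℝ≥0∞) {x y : S} (h : x ≠ y) : stepN Q 0 x y = 0 := by
  simp [stepN, h]

lemma stepN_succ (Q : S → S → ℝ≥0∞) (n : ℕ) (x y : S) :
    stepN Q (n+1) x y = ∑' z, Q x z * stepN Q n z y := rfl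

lemma firstHit_zero_self (Q : S → S → ℝ≥0∞) (b : S) : firstHit Q b 0 b = 1 := by simp [firstHit]

lemma firstHit_zero_ne (Q : S → S → ℝ≥0∞) {b z : S} (h : z ≠ b) : firstHit Q b 0 z = 0 := by
  simp [firstHit, h]

lemma firstHit_succ_self (Q : S → S → ℝ≥0∞) (b : S) (n : ℕ) : firstHit Q b (n+1) b = 0 := by
  simp [firstHit]

lemma firstHit_succ_ne (Q : S → S → ℝ≥0∞) {b z : S} (h : z ≠ b) (n : ℕ) :
    firstHit Q b (n+1) z = ∑' w, Q z w * firstHit Q b n w := by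
  simp [firstHit, h]

lemma firstReturn_succ (Q : S → S → ℝ≥0∞) (b : S) (n : ℕ) :
    firstReturn Q b (n+1) = ∑' z, Q b z * firstHit Q b n z := rfl

/-- swap a finite sum with a tsum -/
lemma tsum_finsum {ι : Type*} (s : Finset ι) (g : ι → S → ℝ≥0∞) (Q : S → ℝ≥0∞) :
    ∑ i ∈ s, ∑' w, Q w * g i w = ∑' w, Q w * ∑ i ∈ s, g i w := by
  rw [← Summable.tsum_finsetSum (fun i _ => ENNReal.summable)]
  exact tsum_congr fun w => (Finset.mul_sum s (fun i => g i w) (Q w)).symm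

/-- partial sums of firstHit are at most 1 -/
lemma firstHit_sum_le_one {Q : S → S → ℝ≥0∞} (hQ : SubStoch Q) (b : S) :
    ∀ (n : ℕ) (z : S), ∑ m ∈ range n, firstHit Q b m z ≤ 1 := by
  intro n
  induction n with
  | zero => intro z; simp
  | succ n ih =>
    intro z
    rw [Finset.sum_range_succ']
    by_cases h : z = b
    · subst h
      simp only [firstHit_succ_self, firstHit_zero_self]
      simp
    · simp only [firstHit_zero_ne Q h, add_zero, firstHit_succ_ne Q h]
      rw [tsum_finsum]
      calc ∑' w, Q z w * ∑ m ∈ range n, firstHit Q b m w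
          ≤ ∑' w, Q z w * 1 := ENNReal.tsum_le_tsum fun w => mul_le_mul_right (ih w) _
        _ = ∑' w, Q z w := by simp
        _ ≤ 1 := hQ z

lemma firstHit_tsum_le_one {Q : S → S → ℝ≥0∞} (hQ : SubStoch Q) (b z : S) :
    ∑' m, firstHit Q b m z ≤ 1 :=
  Summable.tsum_le_of_sum_range_le ENNReal.summable (fun n => firstHit_sum_le_one hQ b n z)


/-- triangle swap for finite double sums -/
lemma triangle_swap (g : ℕ → ℕ → ℝ≥0∞) (N : ℕ) :
    ∑ n ∈ range N, ∑ m ∈ range (n+1), g m n = ∑ m ∈ range N, ∑ n ∈ Ico m N, g m n := by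
  have h := Finset.sum_Ico_Ico_comm 0 N (fun m n => g m n)
  simp only [Finset.range_eq_Ico]
  exact h.symm

/-- first-passage decomposition -/
lemma stepN_decomp (Q : S → S → ℝ≥0∞) (b : S) :
    ∀ (n : ℕ) (z : S),
      stepN Q n z b = ∑ m ∈ range (n+1), firstHit Q b m z * stepN Q (n - m) b b := by
  intro n
  induction n with
  | zero =>
    intro z
    by_cases h : z = b
    · subst h; simp [stepN_zero_self, firstHit_zero_self]
    · simp [stepN_zero_ne Q h, firstHit_zero_ne Q h]
  | succ n ih =>
    intro z
    by_cases h : z = b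
    · subst h
      rw [Finset.sum_eq_single 0]
      · simp [firstHit_zero_self]
      · intro m hm hm0
        obtain ⟨k, rfl⟩ := Nat.exists_eq_succ_of_ne_zero hm0
        simp [firstHit_succ_self]
      · simp
    · rw [stepN_succ]
      calc ∑' w, Q z w * stepN Q n w b
          = ∑' w, Q z w * ∑ m ∈ range (n+1), firstHit Q b m w * stepN Q (n - m) b b := by
            exact tsum_congr fun w => by rw [ih w]
        _ = ∑ m ∈ range (n+1), ∑' w, Q z w * (firstHit Q b m w * stepN Q (n - m) b b) :=
            (tsum_finsum _ _ _).symm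
        _ = ∑ m ∈ range (n+1), (∑' w, Q z w * firstHit Q b m w) * stepN Q (n - m) b b := by
            refine Finset.sum_congr rfl fun m _ => ?_
            simp only [← mul_assoc]
            rw [ENNReal.tsum_mul_right]
        _ = ∑ m ∈ range (n+1), firstHit Q b (m+1) z * stepN Q (n - m) b b := by
            refine Finset.sum_congr rfl fun m _ => ?_
            rw [firstHit_succ_ne Q h]
        _ = ∑ m ∈ range (n+2), firstHit Q b m z * stepN Q (n + 1 - m) b b := by
            rw [Finset.sum_range_succ' (fun m => firstHit Q b m z * stepN Q (n + 1 - m) b b)]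
            simp [firstHit_zero_ne Q h]
    
/-- renewal identity for returns -/
lemma stepN_bb_renewal (Q : S → S → ℝ≥0∞) (b : S) (n : ℕ) :
    stepN Q (n+1) b b = ∑ m ∈ range (n+1), firstReturn Q b (m+1) * stepN Q (n - m) b b := by
  rw [stepN_succ]
  calc ∑' w, Q b w * stepN Q n w b
      = ∑' w, Q b w * ∑ m ∈ range (n+1), firstHit Q b m w * stepN Q (n - m) b b := by
        exact tsum_congr fun w => by rw [stepN_decomp Q b n w]
    _ = ∑ m ∈ range (n+1), ∑' w, Q b w * (firstHit Q b m w * stepN Q (n - m) b b) :=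
        (tsum_finsum _ _ _).symm
    _ = ∑ m ∈ range (n+1), (∑' w, Q b w * firstHit Q b m w) * stepN Q (n - m) b b := by
        refine Finset.sum_congr rfl fun m _ => ?_
        simp only [← mul_assoc]
        rw [ENNReal.tsum_mul_right]
    _ = ∑ m ∈ range (n+1), firstReturn Q b (m+1) * stepN Q (n - m) b b := by
        refine Finset.sum_congr rfl fun m _ => ?_
        rw [firstReturn_succ]

/-- renewal bound: partial sums of return probabilities to `b` are bounded by `C`
provided `1 + R·C ≤ C`. -/
lemma renewal_bound (Q : S → S → ℝ≥0∞) (b : S) (C : ℝ≥0∞)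
    (h1 : 1 + (∑' n, firstReturn Q b n) * C ≤ C) :
    ∀ N, ∑ n ∈ range N, stepN Q n b b ≤ C := by
  intro N
  induction N using Nat.strong_induction_on with
  | _ N ih =>
    match N with
    | 0 => simp
    | (N+1) =>
      rw [Finset.sum_range_succ' (fun n => stepN Q n b b)]
      have hmain : ∑ n ∈ range N, stepN Q (n+1) b b
          ≤ (∑' n, firstReturn Q b n) * C := by
        calc ∑ n ∈ range N, stepN Q (n+1) b b
            = ∑ n ∈ range N, ∑ m ∈ range (n+1), firstReturn Q b (m+1) * stepN Q (n - m) b b := by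
              exact Finset.sum_congr rfl fun n _ => stepN_bb_renewal Q b n
          _ = ∑ m ∈ range N, ∑ n ∈ Ico m N, firstReturn Q b (m+1) * stepN Q (n - m) b b :=
              triangle_swap _ N
          _ = ∑ m ∈ range N, firstReturn Q b (m+1) * ∑ n ∈ Ico m N, stepN Q (n - m) b b := by
              exact Finset.sum_congr rfl fun m _ => (Finset.mul_sum _ _ _).symm
          _ ≤ ∑ m ∈ range N, firstReturn Q b (m+1) * C := by
              refine Finset.sum_le_sum fun m hm => ?_
              refine mul_le_mul_right ?_ _
              rw [Finset.sum_Ico_eq_sum_range]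
              have : ∑ k ∈ range (N - m), stepN Q (m + k - m) b b
                  = ∑ k ∈ range (N - m), stepN Q k b b := by
                exact Finset.sum_congr rfl fun k _ => by rw [Nat.add_sub_cancel_left]
              rw [this]
              exact ih (N - m) (by omega)
          _ ≤ (∑' n, firstReturn Q b n) * C := by
              rw [← Finset.sum_mul]
              refine mul_le_mul_left ?_ _
              calc ∑ m ∈ range N, firstReturn Q b (m+1)
                  ≤ ∑ m ∈ range (N+1), firstReturn Q b m := by
                    rw [Finset.sum_range_succ' (fun m => firstReturn Q b m)]
                    exact le_add_right le_rfl
                _ ≤ ∑' n, firstReturn Q b n := ENNReal.sum_le_tsum _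
      calc ∑ n ∈ range N, stepN Q (n+1) b b + stepN Q 0 b b
          ≤ (∑' n, firstReturn Q b n) * C + 1 := by
            rw [stepN_zero_self]
            exact add_le_add_left hmain 1
        _ = 1 + (∑' n, firstReturn Q b n) * C := add_comm _ _
        _ ≤ C := h1

/-- occupation bound from arbitrary start -/
lemma occupation_bound {Q : S → S → ℝ≥0∞} (hQ : SubStoch Q) (b z : S) (C : ℝ≥0∞)
    (hu : ∀ N, ∑ n ∈ range N, stepN Q n b b ≤ C) :
    ∑' n, stepN Q n z b ≤ C := by
  refine Summable.tsum_le_of_sum_range_le ENNReal.summable fun N => ?_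
  have key : ∑ n ∈ range N, stepN Q n z b ≤ ∑ n ∈ range N, ∑ m ∈ range (n+1),
      firstHit Q b m z * stepN Q (n - m) b b := by
    exact le_of_eq (Finset.sum_congr rfl fun n _ => stepN_decomp Q b n z)
  calc ∑ n ∈ range N, stepN Q n z b
      ≤ ∑ n ∈ range N, ∑ m ∈ range (n+1), firstHit Q b m z * stepN Q (n - m) b b := key
    _ = ∑ m ∈ range N, firstHit Q b m z * ∑ n ∈ Ico m N, stepN Q (n - m) b b := by
        rw [triangle_swap]
        exact Finset.sum_congr rfl fun m _ => (Finset.mul_sum _ _ _).symm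
    _ ≤ ∑ m ∈ range N, firstHit Q b m z * C := by
        refine Finset.sum_le_sum fun m hm => ?_
        refine mul_le_mul_right ?_ _
        rw [Finset.sum_Ico_eq_sum_range]
        have : ∑ k ∈ range (N - m), stepN Q (m + k - m) b b
            = ∑ k ∈ range (N - m), stepN Q k b b := by
          exact Finset.sum_congr rfl fun k _ => by rw [Nat.add_sub_cancel_left]
        rw [this]
        exact hu (N - m)
    _ = (∑ m ∈ range N, firstHit Q b m z) * C := (Finset.sum_mul _ _ _).symm
    _ ≤ 1 * C := mul_le_mul_left (firstHit_sum_le_one hQ b N z) C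
    _ = C := one_mul C

/-- resolvent identity, diagonal case -/
lemma occupation_eq_self (Q : S → S → ℝ≥0∞) (z : S) :
    ∑' n, stepN Q n z z = 1 + ∑' w, Q z w * ∑' n, stepN Q n w z := by
  rw [tsum_eq_zero_add' ENNReal.summable, stepN_zero_self]
  congr 1
  calc ∑' n, stepN Q (n+1) z z = ∑' (n) (w), Q z w * stepN Q n w z := by
        exact tsum_congr fun n => stepN_succ Q n z z
    _ = ∑' (w) (n), Q z w * stepN Q n w z := ENNReal.tsum_comm
    _ = ∑' w, Q z w * ∑' n, stepN Q n w z := by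
        exact tsum_congr fun w => ENNReal.tsum_mul_left

/-- resolvent identity, off-diagonal case -/
lemma occupation_eq_ne (Q : S → S → ℝ≥0∞) {z b : S} (h : z ≠ b) :
    ∑' n, stepN Q n z b = ∑' w, Q z w * ∑' n, stepN Q n w b := by
  rw [tsum_eq_zero_add' ENNReal.summable, stepN_zero_ne Q h, zero_add]
  calc ∑' n, stepN Q (n+1) z b = ∑' (n) (w), Q z w * stepN Q n w b := by
        exact tsum_congr fun n => stepN_succ Q n z b
    _ = ∑' (w) (n), Q z w * stepN Q n w b := ENNReal.tsum_comm
    _ = ∑' w, Q z w * ∑' n, stepN Q n w b := by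
        exact tsum_congr fun w => ENNReal.tsum_mul_left

/-- killing at the target does not change first-hit probabilities -/
lemma firstHit_kill_target (Q : S → S → ℝ≥0∞) (b : S) :
    ∀ (n : ℕ) (z : S), firstHit Q b n z = firstHit (kill Q b) b n z := by
  intro n
  induction n with
  | zero => intro z; by_cases h : z = b
            · subst h; rw [firstHit_zero_self, firstHit_zero_self]
            · rw [firstHit_zero_ne Q h, firstHit_zero_ne _ h]
  | succ n ih =>
    intro z
    by_cases h : z = b
    · subst h; rw [firstHit_succ_self, firstHit_succ_self]
    · rw [firstHit_succ_ne Q h, firstHit_succ_ne _ h]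
      exact tsum_congr fun w => by rw [kill_ne h, ih w]

/-- first hits of two distinct killed states are (sub)disjoint events -/
lemma firstHit_two_sum_le_one {T : S → S → ℝ≥0∞} (hT : SubStoch T) {b x₀ : S} (hbx : b ≠ x₀)
    (hTb : ∀ w, T b w = 0) (hTx : ∀ w, T x₀ w = 0) :
    ∀ (n : ℕ) (z : S), ∑ m ∈ range n, (firstHit T b m z + firstHit T x₀ m z) ≤ 1 := by
  intro n
  induction n with
  | zero => intro z; simp
  | succ n ih =>
    intro z
    rw [Finset.sum_range_succ']
    by_cases hb : z = b
    · rw [hb]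
      have h1 : ∀ m, firstHit T b (m+1) b + firstHit T x₀ (m+1) b = 0 := by
        intro m
        rw [firstHit_succ_self]
        rw [firstHit_succ_ne T hbx]
        simp [hTb]
      have h2 : firstHit T b 0 b + firstHit T x₀ 0 b = 1 := by
        rw [firstHit_zero_self, firstHit_zero_ne T hbx, add_zero]
      simp only [h1, h2, Finset.sum_const_zero, zero_add]
      exact le_rfl
    · by_cases hx : z = x₀
      · rw [hx]
        have h1 : ∀ m, firstHit T b (m+1) x₀ + firstHit T x₀ (m+1) x₀ = 0 := by
          intro m
          rw [firstHit_succ_self]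
          rw [firstHit_succ_ne T (Ne.symm hbx)]
          simp [hTx]
        have h2 : firstHit T b 0 x₀ + firstHit T x₀ 0 x₀ = 1 := by
          rw [firstHit_zero_self, firstHit_zero_ne T (Ne.symm hbx), zero_add]
        simp only [h1, h2, Finset.sum_const_zero, zero_add]
        exact le_rfl
      · have key : ∀ m, firstHit T b (m+1) z + firstHit T x₀ (m+1) z
            = ∑' w, T z w * (firstHit T b m w + firstHit T x₀ m w) := by
          intro m
          rw [firstHit_succ_ne T hb, firstHit_succ_ne T hx,
            ← ENNReal.tsum_add]
          exact tsum_congr fun w => (mul_add _ _ _).symm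
        have h0 : firstHit T b 0 z + firstHit T x₀ 0 z = 0 := by
          rw [firstHit_zero_ne T hb, firstHit_zero_ne T hx, add_zero]
        simp only [key, h0, add_zero]
        rw [tsum_finsum]
        calc ∑' w, T z w * ∑ m ∈ range n, (firstHit T b m w + firstHit T x₀ m w)
            ≤ ∑' w, T z w * 1 := ENNReal.tsum_le_tsum fun w => mul_le_mul_right (ih w) _
          _ = ∑' w, T z w := by simp
          _ ≤ 1 := hT z


/-- survival probability: probability of not hitting `x₀` within the first `n` steps -/
noncomputable def surv (P : S → S → ℝ≥0∞) (x₀ : S) : ℕ → S → ℝ≥0∞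
  | 0 => fun z => by classical exact if z = x₀ then 0 else 1
  | n + 1 => fun z => by
      classical exact if z = x₀ then 0 else ∑' w, P z w * surv P x₀ n w

lemma surv_self (P : S → S → ℝ≥0∞) (x₀ : S) (n : ℕ) : surv P x₀ n x₀ = 0 := by
  cases n <;> simp [surv]

lemma surv_zero_ne (P : S → S → ℝ≥0∞) {x₀ z : S} (h : z ≠ x₀) : surv P x₀ 0 z = 1 := by
  simp [surv, h]

lemma surv_succ_ne (P : S → S → ℝ≥0∞) {x₀ z : S} (h : z ≠ x₀) (n : ℕ) :
    surv P x₀ (n+1) z = ∑' w, P z w * surv P x₀ n w := by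
  simp [surv, h]

/-- hitting-by-time-n plus survival equals one -/
lemma firstHit_add_surv {P : S → S → ℝ≥0∞} (hP : IsTransKernel P) (x₀ : S) :
    ∀ (n : ℕ) (z : S), ∑ m ∈ range (n+1), firstHit P x₀ m z + surv P x₀ n z = 1 := by
  intro n
  induction n with
  | zero =>
    intro z
    by_cases h : z = x₀
    · rw [h, Finset.sum_range_one, firstHit_zero_self, surv_self, add_zero]
    · rw [Finset.sum_range_one, firstHit_zero_ne P h, surv_zero_ne P h, zero_add]
  | succ n ih =>
    intro z
    by_cases h : z = x₀
    · rw [h]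
      rw [surv_self, add_zero, Finset.sum_range_succ']
      simp [firstHit_succ_self, firstHit_zero_self]
    · rw [Finset.sum_range_succ' (fun m => firstHit P x₀ m z), firstHit_zero_ne P h, add_zero,
        surv_succ_ne P h]
      have h1 : ∀ m, firstHit P x₀ (m+1) z = ∑' w, P z w * firstHit P x₀ m w :=
        fun m => firstHit_succ_ne P h m
      simp only [h1]
      rw [tsum_finsum, ← ENNReal.tsum_add]
      calc ∑' w, (P z w * ∑ m ∈ range (n+1), firstHit P x₀ m w + P z w * surv P x₀ n w)
          = ∑' w, P z w * (∑ m ∈ range (n+1), firstHit P x₀ m w + surv P x₀ n w) := by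
            exact tsum_congr fun w => (mul_add _ _ _).symm
        _ = ∑' w, P z w * 1 := tsum_congr fun w => by rw [ih w]
        _ = 1 := by simpa using hP z

lemma surv_le_one {P : S → S → ℝ≥0∞} (hP : IsTransKernel P) (x₀ : S) (n : ℕ) (z : S) :
    surv P x₀ n z ≤ 1 := by
  rw [← firstHit_add_surv hP x₀ n z]
  exact le_add_self

lemma surv_succ_le {P : S → S → ℝ≥0∞} (hP : IsTransKernel P) (x₀ : S) :
    ∀ (n : ℕ) (z : S), surv P x₀ (n+1) z ≤ surv P x₀ n z := by
  intro n
  induction n with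
  | zero =>
    intro z
    by_cases h : z = x₀
    · rw [h, surv_self]
      exact zero_le
    · rw [surv_succ_ne P h, surv_zero_ne P h]
      calc ∑' w, P z w * surv P x₀ 0 w ≤ ∑' w, P z w * 1 :=
            ENNReal.tsum_le_tsum fun w => mul_le_mul_right (surv_le_one hP x₀ 0 w) _
        _ ≤ 1 := by simpa using le_of_eq (hP z)
  | succ n ih =>
    intro z
    by_cases h : z = x₀
    · rw [h, surv_self, surv_self]
    · rw [surv_succ_ne P h, surv_succ_ne P h]
      exact ENNReal.tsum_le_tsum fun w => mul_le_mul_right (ih w) _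

lemma surv_antitone {P : S → S → ℝ≥0∞} (hP : IsTransKernel P) (x₀ : S) (z : S) :
    Antitone (fun n => surv P x₀ n z) :=
  antitone_nat_of_succ_le fun n => surv_succ_le hP x₀ n z

/-- key supersolution estimate for partial sums of survival probabilities -/
lemma sum_surv_le {P : S → S → ℝ≥0∞} (hP : IsTransKernel P) (x₀ : S)
    (W : S → ℝ≥0∞) (hW : ∀ z, z ≠ x₀ → 1 + ∑' w, P z w * W w ≤ W z) :
    ∀ (n : ℕ) (z : S), ∑ k ∈ range n, surv P x₀ k z ≤ W z := by
  intro n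
  induction n with
  | zero => intro z; simp
  | succ n ih =>
    intro z
    by_cases h : z = x₀
    · rw [h]
      simp [surv_self]
    · rw [Finset.sum_range_succ' (fun k => surv P x₀ k z), surv_zero_ne P h]
      have h1 : ∀ k, surv P x₀ (k+1) z = ∑' w, P z w * surv P x₀ k w :=
        fun k => surv_succ_ne P h k
      simp only [h1]
      rw [tsum_finsum]
      calc ∑' w, P z w * ∑ k ∈ range n, surv P x₀ k w + 1
          ≤ ∑' w, P z w * W w + 1 :=
            add_le_add_left (ENNReal.tsum_le_tsum fun w => mul_le_mul_right (ih w) _) 1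
        _ = 1 + ∑' w, P z w * W w := add_comm _ _
        _ ≤ W z := hW z h

lemma surv_tendsto_zero {P : S → S → ℝ≥0∞} (hP : IsTransKernel P) (x₀ : S)
    (W : S → ℝ≥0∞) (hWfin : ∀ z, W z ≠ ⊤)
    (hW : ∀ z, z ≠ x₀ → 1 + ∑' w, P z w * W w ≤ W z) (z : S) :
    Tendsto (fun n => surv P x₀ n z) atTop (nhds 0) := by
  have hbound : ∀ n : ℕ, n ≠ 0 → surv P x₀ n z ≤ W z / (n : ℝ≥0∞) := by
    intro n hn
    rw [ENNReal.le_div_iff_mul_le (Or.inl (by exact_mod_cast hn)) (Or.inl (by simp))]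
    calc surv P x₀ n z * (n : ℝ≥0∞) = ∑ k ∈ range n, surv P x₀ n z := by
          rw [Finset.sum_const, Finset.card_range, nsmul_eq_mul, mul_comm]
      _ ≤ ∑ k ∈ range n, surv P x₀ k z := by
          refine Finset.sum_le_sum fun k hk => ?_
          exact surv_antitone hP x₀ z (le_of_lt (Finset.mem_range.mp hk))
      _ ≤ W z := sum_surv_le hP x₀ W hW n z
  have hlim : Tendsto (fun n : ℕ => W z / (n : ℝ≥0∞)) atTop (nhds 0) := by
    have h1 : Tendsto (fun n : ℕ => ((n : ℝ≥0∞))⁻¹) atTop (nhds 0) :=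
      ENNReal.tendsto_inv_nat_nhds_zero
    have h2 := ENNReal.Tendsto.const_mul h1 (Or.inr (hWfin z))
    simpa [div_eq_mul_inv, mul_comm] using h2
  refine tendsto_of_tendsto_of_tendsto_of_le_of_le' tendsto_const_nhds hlim
    (Eventually.of_forall fun n => zero_le) ?_
  filter_upwards [eventually_ne_atTop 0] with n hn
  exact hbound n hn

/-- total hitting probability is one under a supersolution -/
lemma tsum_firstHit_eq_one {P : S → S → ℝ≥0∞} (hP : IsTransKernel P) (x₀ : S)
    (W : S → ℝ≥0∞) (hWfin : ∀ z, W z ≠ ⊤)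
    (hW : ∀ z, z ≠ x₀ → 1 + ∑' w, P z w * W w ≤ W z) (z : S) :
    ∑' n, firstHit P x₀ n z = 1 := by
  have h1 : Tendsto (fun n => ∑ m ∈ range (n+1), firstHit P x₀ m z) atTop
      (nhds (∑' n, firstHit P x₀ n z)) := by
    have := ENNReal.tendsto_nat_tsum (fun n => firstHit P x₀ n z)
    exact this.comp (tendsto_add_atTop_nat 1)
  have h2 : Tendsto (fun n => ∑ m ∈ range (n+1), firstHit P x₀ m z + surv P x₀ n z) atTop
      (nhds (∑' n, firstHit P x₀ n z + 0)) :=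
    h1.add (surv_tendsto_zero hP x₀ W hWfin hW z)
  have h3 : Tendsto (fun n => ∑ m ∈ range (n+1), firstHit P x₀ m z + surv P x₀ n z) atTop
      (nhds 1) := by
    have : (fun n => ∑ m ∈ range (n+1), firstHit P x₀ m z + surv P x₀ n z) = fun _ => 1 :=
      funext fun n => firstHit_add_surv hP x₀ n z
    rw [this]; exact tendsto_const_nhds
  have := tendsto_nhds_unique h2 h3
  rwa [add_zero] at this

/-- tail of hitting probability is bounded by survival -/
lemma sum_Ico_firstHit_le_surv {P : S → S → ℝ≥0∞} (hP : IsTransKernel P) (x₀ z : S)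
    (k M : ℕ) : ∑ m ∈ Ico (k+1) M, firstHit P x₀ m z ≤ surv P x₀ k z := by
  by_cases hkM : k + 1 ≤ M
  · have hsplit := Finset.sum_range_add_sum_Ico (fun m => firstHit P x₀ m z) hkM
    have hle : ∑ m ∈ range (k+1), firstHit P x₀ m z + ∑ m ∈ Ico (k+1) M, firstHit P x₀ m z
        ≤ ∑ m ∈ range (k+1), firstHit P x₀ m z + surv P x₀ k z := by
      rw [hsplit, firstHit_add_surv hP x₀ k z]
      exact firstHit_sum_le_one (IsTransKernel.subStoch hP) x₀ M z
    exact (ENNReal.add_le_add_iff_left (by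
      exact ne_top_of_le_ne_top ENNReal.one_ne_top (firstHit_sum_le_one (IsTransKernel.subStoch hP) x₀ (k+1) z)
      )).mp hle
  · rw [Finset.Ico_eq_empty (by omega)]
    simp

/-- expected hitting time is bounded by the supersolution -/
lemma tsum_mul_firstHit_le {P : S → S → ℝ≥0∞} (hP : IsTransKernel P) (x₀ : S)
    (W : S → ℝ≥0∞) (hW : ∀ z, z ≠ x₀ → 1 + ∑' w, P z w * W w ≤ W z) (z : S) :
    ∑' n : ℕ, (n : ℝ≥0∞) * firstHit P x₀ n z ≤ W z := by
  refine Summable.tsum_le_of_sum_range_le ENNReal.summable fun N => ?_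
  have hmono : ∑ n ∈ range N, (n : ℝ≥0∞) * firstHit P x₀ n z
      ≤ ∑ n ∈ range (N+1), (n : ℝ≥0∞) * firstHit P x₀ n z :=
    Finset.sum_le_sum_of_subset (Finset.range_subset_range.mpr (by omega))
  refine hmono.trans ?_
  rw [Finset.sum_range_succ' (fun n => (n : ℝ≥0∞) * firstHit P x₀ n z)]
  simp only [Nat.cast_zero, zero_mul, add_zero]
  have hrepr : ∀ n : ℕ, (((n+1 : ℕ)) : ℝ≥0∞) * firstHit P x₀ (n+1) z
      = ∑ k ∈ range (n+1), firstHit P x₀ (n+1) z := by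
    intro n
    rw [Finset.sum_const, Finset.card_range, nsmul_eq_mul]
  calc ∑ n ∈ range N, (((n+1 : ℕ)) : ℝ≥0∞) * firstHit P x₀ (n+1) z
      = ∑ n ∈ range N, ∑ k ∈ range (n+1), firstHit P x₀ (n+1) z := by
        refine Finset.sum_congr rfl fun n _ => ?_
        rw [hrepr n]
    _ = ∑ k ∈ range N, ∑ n ∈ Ico k N, firstHit P x₀ (n+1) z := by
        have h := Finset.sum_Ico_Ico_comm 0 N (fun k n => firstHit P x₀ (n+1) z)
        simp only [Finset.range_eq_Ico]
        exact h.symm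
    _ ≤ ∑ k ∈ range N, surv P x₀ k z := by
        refine Finset.sum_le_sum fun k _ => ?_
        have : ∑ n ∈ Ico k N, firstHit P x₀ (n+1) z = ∑ m ∈ Ico (k+1) (N+1), firstHit P x₀ m z := by
          rw [Finset.sum_Ico_eq_sum_range, Finset.sum_Ico_eq_sum_range]
          refine Finset.sum_congr (by congr 1; omega) fun j _ => by
            congr 1; omega
        rw [this]
        exact sum_Ico_firstHit_le_surv hP x₀ z k (N+1)
    _ ≤ W z := sum_surv_le hP x₀ W hW N z
  
/-- from a supersolution at all states except `x₀`: positive recurrence data at `x₀`. -/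
lemma posrec_of_supersolution {P : S → S → ℝ≥0∞} (hP : IsTransKernel P) (x₀ : S)
    (W : S → ℝ≥0∞) (hWfin : ∀ z, W z ≠ ⊤)
    (hW : ∀ z, z ≠ x₀ → 1 + ∑' w, P z w * W w ≤ W z)
    (hPW : ∑' w, P x₀ w * W w ≠ ⊤) :
    (∑' n, firstReturn P x₀ n = 1) ∧ (∑' n : ℕ, (n : ℝ≥0∞) * firstReturn P x₀ n ≠ ⊤) := by
  constructor
  · rw [tsum_eq_zero_add' ENNReal.summable]
    have h0 : firstReturn P x₀ 0 = 0 := rfl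
    rw [h0, zero_add]
    calc ∑' n, firstReturn P x₀ (n+1)
        = ∑' (n) (w), P x₀ w * firstHit P x₀ n w := tsum_congr fun n => firstReturn_succ P x₀ n
      _ = ∑' (w) (n), P x₀ w * firstHit P x₀ n w := ENNReal.tsum_comm
      _ = ∑' w, P x₀ w * ∑' n, firstHit P x₀ n w := tsum_congr fun w => ENNReal.tsum_mul_left
      _ = ∑' w, P x₀ w * 1 :=
          tsum_congr fun w => by rw [tsum_firstHit_eq_one hP x₀ W hWfin hW w]
      _ = 1 := by simpa using hP x₀
  · rw [tsum_eq_zero_add' ENNReal.summable]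
    have h0 : (0 : ℝ≥0∞) * firstReturn P x₀ 0 = 0 := by simp
    have key : ∑' n : ℕ, (((n+1:ℕ)) : ℝ≥0∞) * firstReturn P x₀ (n+1)
        ≤ ∑' w, P x₀ w * (W w + 1) := by
      calc ∑' n : ℕ, (((n+1:ℕ)) : ℝ≥0∞) * firstReturn P x₀ (n+1)
          = ∑' (n : ℕ) (w), (((n+1:ℕ)) : ℝ≥0∞) * (P x₀ w * firstHit P x₀ n w) := by
            refine tsum_congr fun n => ?_
            rw [firstReturn_succ, ENNReal.tsum_mul_left]
        _ = ∑' (w) (n : ℕ), (((n+1:ℕ)) : ℝ≥0∞) * (P x₀ w * firstHit P x₀ n w) :=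
            ENNReal.tsum_comm
        _ = ∑' w, P x₀ w * ∑' n : ℕ, (((n+1:ℕ)) : ℝ≥0∞) * firstHit P x₀ n w := by
            refine tsum_congr fun w => ?_
            rw [← ENNReal.tsum_mul_left]
            exact tsum_congr fun n => by ring
        _ ≤ ∑' w, P x₀ w * (W w + 1) := by
            refine ENNReal.tsum_le_tsum fun w => mul_le_mul_right ?_ _
            calc ∑' n : ℕ, (((n+1:ℕ)) : ℝ≥0∞) * firstHit P x₀ n w
                = ∑' n : ℕ, ((n : ℝ≥0∞) * firstHit P x₀ n w + firstHit P x₀ n w) := by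
                  refine tsum_congr fun n => ?_
                  push_cast
                  ring
              _ = ∑' n : ℕ, (n : ℝ≥0∞) * firstHit P x₀ n w + ∑' n, firstHit P x₀ n w :=
                  ENNReal.tsum_add
              _ ≤ W w + 1 := add_le_add (tsum_mul_firstHit_le hP x₀ W hW w)
                  (firstHit_tsum_le_one (IsTransKernel.subStoch hP) x₀ w)
    have hfin : ∑' w, P x₀ w * (W w + 1) ≠ ⊤ := by
      have : ∑' w, P x₀ w * (W w + 1) = (∑' w, P x₀ w * W w) + ∑' w, P x₀ w := by
        rw [← ENNReal.tsum_add]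
        exact tsum_congr fun w => by ring
      rw [this, hP x₀]
      exact ENNReal.add_ne_top.mpr ⟨hPW, ENNReal.one_ne_top⟩
    simp only [Nat.cast_zero, zero_mul, zero_add]
    exact ne_top_of_le_ne_top hfin key


/-- extract a positive-probability path from a positive n-step transition -/
lemma exists_path (Q : S → S → ℝ≥0∞) :
    ∀ (n : ℕ) (x y : S), stepN Q n x y ≠ 0 →
      ∃ w : ℕ → S, w 0 = x ∧ w n = y ∧ ∀ i, i < n → Q (w i) (w (i+1)) ≠ 0 := by
  intro n
  induction n with
  | zero =>
    intro x y h
    by_cases hxy : x = y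
    · exact ⟨fun _ => x, rfl, by rw [hxy], fun i hi => absurd hi (by omega)⟩
    · exact absurd (stepN_zero_ne Q hxy) h
  | succ n ih =>
    intro x y h
    rw [stepN_succ] at h
    have hex : ∃ z, Q x z * stepN Q n z y ≠ 0 := by
      by_contra hc
      push_neg at hc
      exact h (ENNReal.tsum_eq_zero.mpr fun z => hc z)
    obtain ⟨z, hz⟩ := hex
    obtain ⟨hQ, hs⟩ := mul_ne_zero_iff.mp hz
    obtain ⟨w', hw0, hwn, hwstep⟩ := ih z y hs
    classical
    refine ⟨fun i => if i = 0 then x else w' (i - 1), by simp, ?_, ?_⟩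
    · simp only [Nat.succ_ne_zero, if_false, Nat.add_sub_cancel]
      exact hwn
    · intro i hi
      match i with
      | 0 => simpa [hw0] using hQ
      | (j+1) =>
        simp only [Nat.succ_ne_zero, if_false, Nat.add_sub_cancel]
        exact hwstep j (by omega)

/-- positivity of firstHit along a concrete avoiding path -/
lemma firstHit_pos_of_path (T : S → S → ℝ≥0∞) (x₀ : S) :
    ∀ (m : ℕ) (v : ℕ → S), v m = x₀ → (∀ i, i < m → v i ≠ x₀) →
      (∀ i, i < m → T (v i) (v (i+1)) ≠ 0) → firstHit T x₀ m (v 0) ≠ 0 := by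
  intro m
  induction m with
  | zero =>
    intro v hvm _ _
    rw [hvm, firstHit_zero_self]
    exact one_ne_zero
  | succ m ih =>
    intro v hvm hx hT
    have hv0 : v 0 ≠ x₀ := hx 0 (by omega)
    rw [firstHit_succ_ne T hv0]
    have hterm : T (v 0) (v 1) * firstHit T x₀ m (v 1) ≠ 0 := by
      refine mul_ne_zero (hT 0 (by omega)) ?_
      exact ih (fun i => v (i+1)) hvm (fun i hi => hx (i+1) (by omega))
        (fun i hi => hT (i+1) (by omega))
    intro hc
    exact hterm (ENNReal.tsum_eq_zero.mp hc (v 1))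

/-- positive probability of escaping from `b` to `x₀` while avoiding `b` -/
lemma escape_pos {P : S → S → ℝ≥0∞} (hirr : ∀ x y : S, ∃ n : ℕ, stepN P n x y ≠ 0)
    {b x₀ : S} (hbx : b ≠ x₀) :
    ∑' w, P b w * (∑' m, firstHit (kill (kill P x₀) b) x₀ m w) ≠ 0 := by
  classical
  obtain ⟨n, hn⟩ := hirr b x₀
  obtain ⟨w, hw0, hwn, hwstep⟩ := exists_path P n b x₀ hn
  have hn1 : 1 ≤ n := by
    rcases Nat.eq_zero_or_pos n with h | h
    · exfalso; apply hbx; rw [← hw0, ← hwn, h]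
    · exact h
  -- last visit to b among indices ≤ n-1
  set j₀ := Nat.findGreatest (fun j => w j = b) (n-1) with hj₀def
  have hj₀b : w j₀ = b :=
    Nat.findGreatest_spec (P := fun j => w j = b) (Nat.zero_le (n-1)) hw0
  have hj₀le : j₀ ≤ n - 1 := Nat.findGreatest_le _
  have hj₀max : ∀ k, j₀ < k → k ≤ n - 1 → w k ≠ b :=
    fun k hk1 hk2 => Nat.findGreatest_is_greatest (P := fun j => w j = b) hk1 hk2
  -- first visit to x₀ after j₀
  have hexm : ∃ m, w (j₀ + 1 + m) = x₀ := by
    refine ⟨n - j₀ - 1, ?_⟩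
    have : j₀ + 1 + (n - j₀ - 1) = n := by omega
    rw [this, hwn]
  set m₀ := Nat.find hexm with hm₀def
  have hm₀ : w (j₀ + 1 + m₀) = x₀ := Nat.find_spec hexm
  have hm₀min : ∀ m, m < m₀ → w (j₀ + 1 + m) ≠ x₀ := fun m hm => Nat.find_min hexm hm
  have hm₀le : m₀ ≤ n - j₀ - 1 := by
    apply Nat.find_min' hexm
    have : j₀ + 1 + (n - j₀ - 1) = n := by omega
    rw [this, hwn]
  have hile : j₀ + 1 + m₀ ≤ n := by omega
  -- the escape path
  set v : ℕ → S := fun i => w (j₀ + 1 + i) with hvdef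
  have hkey : firstHit (kill (kill P x₀) b) x₀ m₀ (v 0) ≠ 0 := by
    refine firstHit_pos_of_path _ x₀ m₀ v hm₀ hm₀min ?_
    intro i hi
    have hvx : v i ≠ x₀ := hm₀min i hi
    have hvb : v i ≠ b := hj₀max (j₀ + 1 + i) (by omega) (by omega)
    rw [kill_ne hvb, kill_ne hvx]
    have : j₀ + 1 + (i + 1) = (j₀ + 1 + i) + 1 := by omega
    rw [hvdef]
    simp only []
    rw [this]
    exact hwstep (j₀ + 1 + i) (by omega)
  have hPb : P b (v 0) ≠ 0 := by
    have := hwstep j₀ (by omega)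
    rwa [hj₀b] at this
  intro hc
  have hzero := ENNReal.tsum_eq_zero.mp hc (v 0)
  have hH : (∑' m, firstHit (kill (kill P x₀) b) x₀ m (v 0)) ≠ 0 := fun h =>
    hkey (ENNReal.tsum_eq_zero.mp h m₀)
  exact mul_ne_zero hPb hH hzero


/-- bounded expected number of visits to `b` before hitting `x₀` -/
lemma bounded_occupation {P : S → S → ℝ≥0∞} (hP : IsTransKernel P)
    (hirr : ∀ x y : S, ∃ n : ℕ, stepN P n x y ≠ 0) {b x₀ : S} (hbx : b ≠ x₀) :
    ∃ C : ℝ≥0∞, C ≠ ⊤ ∧ ∀ z, ∑' n, stepN (kill P x₀) n z b ≤ C := by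
  set Q : S → S → ℝ≥0∞ := kill P x₀ with hQdef
  set T : S → S → ℝ≥0∞ := kill Q b with hTdef
  have hsubQ : SubStoch Q := subStoch_kill (IsTransKernel.subStoch hP) x₀
  have hsubT : SubStoch T := subStoch_kill hsubQ b
  have hTb : ∀ w, T b w = 0 := fun w => kill_self w
  have hTx : ∀ w, T x₀ w = 0 := fun w => by
    rw [hTdef, kill_ne (Ne.symm hbx), hQdef, kill_self]
  set η : ℝ≥0∞ := ∑' w, Q b w * (∑' m, firstHit T x₀ m w) with hηdef
  set R : ℝ≥0∞ := ∑' n, firstReturn Q b n with hRdef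
  -- η is positive
  have hη0 : η ≠ 0 := by
    have := escape_pos hirr hbx
    rw [hηdef]
    have hrw : ∀ w : S, Q b w = P b w := fun w => kill_ne hbx w
    rw [show (∑' w, Q b w * (∑' m, firstHit T x₀ m w))
        = ∑' w, P b w * (∑' m, firstHit T x₀ m w) from tsum_congr fun w => by rw [hrw w]]
    exact this
  -- R + η ≤ 1
  have hRη : R + η ≤ 1 := by
    have hReq : R = ∑' w, Q b w * (∑' m, firstHit T b m w) := by
      rw [hRdef, tsum_eq_zero_add' ENNReal.summable]
      have h0 : firstReturn Q b 0 = 0 := rfl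
      rw [h0, zero_add]
      calc ∑' n, firstReturn Q b (n+1)
          = ∑' (n) (w), Q b w * firstHit Q b n w := tsum_congr fun n => firstReturn_succ Q b n
        _ = ∑' (w) (n), Q b w * firstHit Q b n w := ENNReal.tsum_comm
        _ = ∑' w, Q b w * ∑' n, firstHit Q b n w := tsum_congr fun w => ENNReal.tsum_mul_left
        _ = ∑' w, Q b w * ∑' n, firstHit T b n w := by
            refine tsum_congr fun w => ?_
            congr 1
            exact tsum_congr fun n => firstHit_kill_target Q b n w
    have hFH : ∀ w, (∑' m, firstHit T b m w) + (∑' m, firstHit T x₀ m w) ≤ 1 := by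
      intro w
      rw [← ENNReal.tsum_add]
      exact Summable.tsum_le_of_sum_range_le ENNReal.summable
        (fun n => firstHit_two_sum_le_one hsubT hbx hTb hTx n w)
    calc R + η = ∑' w, (Q b w * (∑' m, firstHit T b m w) + Q b w * (∑' m, firstHit T x₀ m w)) := by
          rw [ENNReal.tsum_add, ← hReq, ← hηdef]
      _ = ∑' w, Q b w * ((∑' m, firstHit T b m w) + (∑' m, firstHit T x₀ m w)) :=
          tsum_congr fun w => (mul_add _ _ _).symm
      _ ≤ ∑' w, Q b w * 1 := ENNReal.tsum_le_tsum fun w => mul_le_mul_right (hFH w) _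
      _ = ∑' w, Q b w := by simp
      _ ≤ 1 := hsubQ b
  have hη1 : η ≤ 1 := le_trans (le_add_self) hRη
  have hηtop : η ≠ ⊤ := ne_top_of_le_ne_top ENNReal.one_ne_top hη1
  refine ⟨η⁻¹, ENNReal.inv_ne_top.mpr hη0, fun z => ?_⟩
  have h1C : 1 + R * η⁻¹ ≤ η⁻¹ := by
    have hcancel : η⁻¹ * η = 1 := ENNReal.inv_mul_cancel hη0 hηtop
    calc 1 + R * η⁻¹ = η⁻¹ * η + η⁻¹ * R := by rw [hcancel, mul_comm R η⁻¹]
      _ = η⁻¹ * (R + η) := by rw [mul_add]; ring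
      _ ≤ η⁻¹ * 1 := mul_le_mul_right hRη _
      _ = η⁻¹ := mul_one _
  exact occupation_bound hsubQ b z η⁻¹ (renewal_bound Q b η⁻¹ h1C)


lemma tsum_step0_mul (P : S → S → ℝ≥0∞) (V : S → ℝ≥0∞) (z : S) :
    ∑' y, stepN P 0 z y * V y = V z := by
  rw [tsum_eq_single z (fun y hy => by rw [stepN_zero_ne P (Ne.symm hy), zero_mul])]
  rw [stepN_zero_self, one_mul]

lemma gCK (P : S → S → ℝ≥0∞) (V : S → ℝ≥0∞) (j : ℕ) (z : S) :
    (∑' y, stepN P (j+1) z y * V y) = ∑' w, P z w * ∑' y, stepN P j w y * V y := by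
  calc ∑' y, stepN P (j+1) z y * V y
      = ∑' (y) (w), P z w * stepN P j w y * V y := by
        refine tsum_congr fun y => ?_
        rw [stepN_succ, ← ENNReal.tsum_mul_right]
    _ = ∑' (w) (y), P z w * stepN P j w y * V y := ENNReal.tsum_comm
    _ = ∑' w, P z w * ∑' y, stepN P j w y * V y := by
        refine tsum_congr fun w => ?_
        rw [← ENNReal.tsum_mul_left]
        exact tsum_congr fun y => by ring


end FosterAux

open FosterAux Finset Filter

/-- a Foster–Lyapunov criterion with drift measured between two future
times `k+L < k+K`: an irreducible chain admitting a Lyapunov function `V` with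
`E[V(X_{k+K}) - V(X_{k+L}) ∣ X_k = x] ≤ -ε + A·1_B(x)` (for a finite set `B`), and
such that `E[V(X_{k+1})] < ∞` whenever `E[V(X_k)] < ∞`, is positive recurrent. -/
theorem foster_lyapunov_two_time (S : Type*) [Countable S] (P : S → S → ℝ≥0∞)
    (hP : IsTransKernel P) (hirr : MCIrreducible P)
    (V : S → ℝ≥0∞) (hVfin : ∀ x, V x ≠ ⊤)
    (L K : ℕ) (hL : 1 ≤ L) (hLK : L < K)
    (B : Set S) (hB : B.Finite) (ε A : ℝ≥0∞) (hε : 0 < ε) (hA : A ≠ ⊤)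
    (hfin : ∀ (x₀ : S) (k : ℕ), (∑' y, stepN P k x₀ y * V y) ≠ ⊤ →
      (∑' y, stepN P (k + 1) x₀ y * V y) ≠ ⊤)
    (hdrift : ∀ x : S,
      (∑' y, stepN P K x y * V y) + ε
        ≤ (∑' y, stepN P L x y * V y) + A * B.indicator 1 x) :
    MCPositiveRecurrent P := by
  classical
  intro x₀
  -- the one-step Lyapunov function U
  set g : ℕ → S → ℝ≥0∞ := fun j z => ∑' y, stepN P j z y * V y with hgdef
  have hgfin : ∀ (z : S) (j : ℕ), g j z ≠ ⊤ := by
    intro z j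
    induction j with
    | zero => rw [hgdef]; simp only []; rw [tsum_step0_mul]; exact hVfin z
    | succ j ihj => exact hfin z j ihj
  have hindle : ∀ z : S, B.indicator (1 : S → ℝ≥0∞) z ≤ 1 := by
    intro z
    rw [Set.indicator_apply]
    split_ifs <;> simp
  have hεtop : ε ≠ ⊤ := by
    have h1 : ε ≤ g L x₀ + A := by
      calc ε ≤ g K x₀ + ε := le_add_self
        _ ≤ g L x₀ + A * B.indicator 1 x₀ := hdrift x₀
        _ ≤ g L x₀ + A * 1 := add_le_add_right (mul_le_mul_right (hindle x₀) A) _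
        _ = g L x₀ + A := by rw [mul_one]
    exact ne_top_of_le_ne_top (ENNReal.add_ne_top.mpr ⟨hgfin x₀ L, hA⟩) h1
  have hε0 : ε ≠ 0 := hε.ne'
  set U : S → ℝ≥0∞ := fun z => ∑ j ∈ Ico L K, g j z with hUdef
  have hUfin : ∀ z, U z ≠ ⊤ := by
    intro z
    rw [hUdef]
    simp only []
    exact (ENNReal.sum_lt_top.mpr fun j _ => (hgfin z j).lt_top).ne
  have hUdrift : ∀ z, (∑' w, P z w * U w) + ε ≤ U z + A * B.indicator 1 z := by
    intro z
    have hPU : ∑' w, P z w * U w = ∑ j ∈ Ico L K, g (j+1) z := by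
      calc ∑' w, P z w * U w = ∑ j ∈ Ico L K, ∑' w, P z w * g j w := (tsum_finsum _ _ _).symm
        _ = ∑ j ∈ Ico L K, g (j+1) z := Finset.sum_congr rfl fun j _ => (gCK P V j z).symm
    have hre : ∑ j ∈ Ico L K, g (j+1) z = ∑ j ∈ Ico (L+1) (K+1), g j z := by
      rw [Finset.sum_Ico_eq_sum_range, Finset.sum_Ico_eq_sum_range]
      rw [show K + 1 - (L+1) = K - L by omega]
      exact Finset.sum_congr rfl fun k _ => by rw [show L + 1 + k = L + k + 1 by omega]
    have htop : ∑ j ∈ Ico (L+1) (K+1), g j z = ∑ j ∈ Ico (L+1) K, g j z + g K z :=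
      Finset.sum_Ico_succ_top (by omega) _
    have hbot : U z = g L z + ∑ j ∈ Ico (L+1) K, g j z :=
      Finset.sum_eq_sum_Ico_succ_bot hLK _
    calc (∑' w, P z w * U w) + ε
        = (∑ j ∈ Ico (L+1) K, g j z + g K z) + ε := by rw [hPU, hre, htop]
      _ = ∑ j ∈ Ico (L+1) K, g j z + (g K z + ε) := by ring
      _ ≤ ∑ j ∈ Ico (L+1) K, g j z + (g L z + A * B.indicator 1 z) :=
          add_le_add_right (hdrift z) _
      _ = (g L z + ∑ j ∈ Ico (L+1) K, g j z) + A * B.indicator 1 z := by ring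
      _ = U z + A * B.indicator 1 z := by rw [← hbot]
  -- the set B as a finset, with x₀ removed
  set Bf : Finset S := hB.toFinset with hBfdef
  set B' : Finset S := Bf.erase x₀ with hB'def
  -- occupation bounds
  have hOB : ∀ b ∈ B', ∃ C : ℝ≥0∞, C ≠ ⊤ ∧ ∀ z, ∑' n, stepN (kill P x₀) n z b ≤ C :=
    fun b hb => bounded_occupation hP hirr (Finset.ne_of_mem_erase hb)
  choose! C hCtop hCle using hOB
  set MM : S → S → ℝ≥0∞ := fun b z => ∑' n, stepN (kill P x₀) n z b with hMMdef
  set c : ℝ≥0∞ := 1 + A / ε with hcdef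
  have hctop : c ≠ ⊤ := by
    rw [hcdef]
    exact ENNReal.add_ne_top.mpr ⟨ENNReal.one_ne_top, (ENNReal.div_lt_top hA hε0).ne⟩
  set G : S → ℝ≥0∞ := fun z => c * ∑ b ∈ B', MM b z with hGdef
  set Gmax : ℝ≥0∞ := c * ∑ b ∈ B', C b with hGmaxdef
  have hGmaxtop : Gmax ≠ ⊤ := by
    rw [hGmaxdef]
    refine ENNReal.mul_ne_top hctop ?_
    exact (ENNReal.sum_lt_top.mpr fun b hb => ((hCtop b hb)).lt_top).ne
  have hGle : ∀ z, G z ≤ Gmax := by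
    intro z
    rw [hGdef, hGmaxdef]
    exact mul_le_mul_right (Finset.sum_le_sum fun b hb => hCle b hb z) c
  -- resolvent identities for G
  have hPG : ∀ z, z ≠ x₀ →
      ∑' w, P z w * G w = c * ∑ b ∈ B', ∑' w, kill P x₀ z w * MM b w := by
    intro z hz
    calc ∑' w, P z w * G w = ∑' w, kill P x₀ z w * G w := by
          exact tsum_congr fun w => by rw [kill_ne hz]
      _ = ∑' w, kill P x₀ z w * (c * ∑ b ∈ B', MM b w) := rfl
      _ = c * ∑' w, kill P x₀ z w * ∑ b ∈ B', MM b w := by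
          rw [← ENNReal.tsum_mul_left]
          exact tsum_congr fun w => by ring
      _ = c * ∑ b ∈ B', ∑' w, kill P x₀ z w * MM b w := by rw [tsum_finsum]
  have hGmem : ∀ z, z ≠ x₀ → z ∈ B' → G z = c + ∑' w, P z w * G w := by
    intro z hz hzB
    rw [hPG z hz, hGdef]
    simp only []
    rw [← Finset.add_sum_erase _ _ hzB, ← Finset.add_sum_erase _ (fun b => ∑' w, kill P x₀ z w * MM b w) hzB]
    have h1 : MM z z = 1 + ∑' w, kill P x₀ z w * MM z w := occupation_eq_self _ z
    have h2 : ∀ b ∈ B'.erase z, MM b z = ∑' w, kill P x₀ z w * MM b w := by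
      intro b hb
      exact occupation_eq_ne _ (Ne.symm (Finset.ne_of_mem_erase hb))
    rw [h1, Finset.sum_congr rfl h2]
    ring
  have hGnotmem : ∀ z, z ≠ x₀ → z ∉ B' → G z = ∑' w, P z w * G w := by
    intro z hz hzB
    rw [hPG z hz, hGdef]
    simp only []
    congr 1
    refine Finset.sum_congr rfl fun b hb => ?_
    exact occupation_eq_ne _ (fun h => hzB (h ▸ hb))
  -- the supersolution W
  set W : S → ℝ≥0∞ := fun z => U z * ε⁻¹ + G z with hWdef
  have hWfin : ∀ z, W z ≠ ⊤ := by
    intro z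
    rw [hWdef]
    refine ENNReal.add_ne_top.mpr ⟨?_, ne_top_of_le_ne_top hGmaxtop (hGle z)⟩
    exact ENNReal.mul_ne_top (hUfin z) (ENNReal.inv_ne_top.mpr hε0)
  have hPW : ∀ z, ∑' w, P z w * W w = (∑' w, P z w * U w) * ε⁻¹ + ∑' w, P z w * G w := by
    intro z
    rw [hWdef]
    calc ∑' w, P z w * (U w * ε⁻¹ + G w)
        = ∑' w, ((P z w * U w) * ε⁻¹ + P z w * G w) := tsum_congr fun w => by ring
      _ = (∑' w, (P z w * U w) * ε⁻¹) + ∑' w, P z w * G w := ENNReal.tsum_add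
      _ = (∑' w, P z w * U w) * ε⁻¹ + ∑' w, P z w * G w := by rw [ENNReal.tsum_mul_right]
  have hdivdrift : ∀ z, (∑' w, P z w * U w) * ε⁻¹ + 1
      ≤ U z * ε⁻¹ + (A * B.indicator 1 z) * ε⁻¹ := by
    intro z
    have h1 := mul_le_mul_left (hUdrift z) ε⁻¹
    rw [add_mul, add_mul, ENNReal.mul_inv_cancel hε0 hεtop] at h1
    exact h1
  have hWsuper : ∀ z, z ≠ x₀ → 1 + ∑' w, P z w * W w ≤ W z := by
    intro z hz
    rw [hPW z, hWdef]
    by_cases hzB : z ∈ B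
    · have hzB' : z ∈ B' := by
        rw [hB'def]
        exact Finset.mem_erase.mpr ⟨hz, (Set.Finite.mem_toFinset hB).mpr hzB⟩
      have hind : B.indicator (1 : S → ℝ≥0∞) z = 1 := Set.indicator_of_mem hzB 1
      have hGz : G z = c + ∑' w, P z w * G w := hGmem z hz hzB'
      calc 1 + ((∑' w, P z w * U w) * ε⁻¹ + ∑' w, P z w * G w)
          = ((∑' w, P z w * U w) * ε⁻¹ + 1) + ∑' w, P z w * G w := by ring
        _ ≤ (U z * ε⁻¹ + (A * B.indicator 1 z) * ε⁻¹) + ∑' w, P z w * G w :=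
            add_le_add_left (hdivdrift z) _
        _ = U z * ε⁻¹ + (A * ε⁻¹ + ∑' w, P z w * G w) := by rw [hind, mul_one]; ring
        _ ≤ U z * ε⁻¹ + ((1 + A * ε⁻¹) + ∑' w, P z w * G w) := by
            refine add_le_add_right (add_le_add_left le_add_self _) _
        _ = U z * ε⁻¹ + (c + ∑' w, P z w * G w) := by
            rw [hcdef, ENNReal.div_eq_inv_mul, mul_comm ε⁻¹ A]
        _ = U z * ε⁻¹ + G z := by rw [← hGz]
    · have hzB' : z ∉ B' := by
        rw [hB'def]
        intro hmem
        exact hzB ((Set.Finite.mem_toFinset hB).mp (Finset.mem_of_mem_erase hmem))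
      have hind : B.indicator (1 : S → ℝ≥0∞) z = 0 := Set.indicator_of_notMem hzB 1
      have hGz : G z = ∑' w, P z w * G w := hGnotmem z hz hzB'
      calc 1 + ((∑' w, P z w * U w) * ε⁻¹ + ∑' w, P z w * G w)
          = ((∑' w, P z w * U w) * ε⁻¹ + 1) + ∑' w, P z w * G w := by ring
        _ ≤ (U z * ε⁻¹ + (A * B.indicator 1 z) * ε⁻¹) + ∑' w, P z w * G w :=
            add_le_add_left (hdivdrift z) _
        _ = U z * ε⁻¹ + ∑' w, P z w * G w := by rw [hind, mul_zero, zero_mul, add_zero]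
        _ = U z * ε⁻¹ + G z := by rw [← hGz]
  have hPWfin : ∑' w, P x₀ w * W w ≠ ⊤ := by
    rw [hPW x₀]
    refine ENNReal.add_ne_top.mpr ⟨?_, ?_⟩
    · refine ENNReal.mul_ne_top ?_ (ENNReal.inv_ne_top.mpr hε0)
      have h1 : (∑' w, P x₀ w * U w) ≤ U x₀ + A := by
        calc (∑' w, P x₀ w * U w) ≤ (∑' w, P x₀ w * U w) + ε := le_self_add
          _ ≤ U x₀ + A * B.indicator 1 x₀ := hUdrift x₀
          _ ≤ U x₀ + A * 1 := add_le_add_right (mul_le_mul_right (hindle x₀) A) _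
          _ = U x₀ + A := by rw [mul_one]
      exact ne_top_of_le_ne_top (ENNReal.add_ne_top.mpr ⟨hUfin x₀, hA⟩) h1
    · refine ne_top_of_le_ne_top hGmaxtop ?_
      calc ∑' w, P x₀ w * G w ≤ ∑' w, P x₀ w * Gmax :=
            ENNReal.tsum_le_tsum fun w => mul_le_mul_right (hGle w) _
        _ = (∑' w, P x₀ w) * Gmax := ENNReal.tsum_mul_right
        _ = Gmax := by rw [hP x₀, one_mul]
  exact posrec_of_supersolution hP x₀ W hWfin hWsuper hPWfin
end

section
/- Let $\{X_j\}_{j \in \mathbb{N}}$ be a positive recurrent irreducible Markov chain on a countable state space $\mathcal{S}$, let $V, f, g$ be non-negative functions on $\mathcal{S}$, and let $1 \le L < K$ be integers. Suppose (i) $\mathrm{E}[V(X_{k+1})] < \infty$ whenever $\mathrm{E}[V(X_k)] < \infty$, and (ii) $\mathrm{E}[V(X_{k+K}) - V(X_{k+L}) \mid X_k = x] \le -f(x) + g(x)$ for all $x \in \mathcal{S}$. If $\hat{X}$ is distributed according to the stationary distribution of the chain, then $\mathrm{E}[f(\hat{X})] \le \mathrm{E}[g(\hat{X})]$. -/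
open scoped ENNReal

section MarkovChain

variable {S : Type*}

/-- `π` is a stationary probability distribution for the kernel `P`. -/
def IsStationaryDist (P : S → S → ℝ≥0∞) (π : S → ℝ≥0∞) : Prop :=
  (∑' x, π x = 1) ∧ ∀ y, (∑' x, π x * P x y) = π y

end MarkovChain

section AuxLemmas

variable {S : Type*}

/-- Expected value of `V` after `j` steps, started at `x`. -/
noncomputable def expV (P : S → S → ℝ≥0∞) (V : S → ℝ≥0∞) (j : ℕ) (x : S) : ℝ≥0∞ :=
  ∑' y, stepN P j x y * V y

lemma expV_zero (P : S → S → ℝ≥0∞) (V : S → ℝ≥0∞) (x : S) : expV P V 0 x = V x := by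
  classical
  have : expV P V 0 x = ∑' y, (if x = y then (1 : ℝ≥0∞) else 0) * V y := rfl
  rw [this, tsum_eq_single x]
  · simp
  · intro b hb
    simp [Ne.symm hb]

lemma expV_succ (P : S → S → ℝ≥0∞) (V : S → ℝ≥0∞) (j : ℕ) (x : S) :
    expV P V (j + 1) x = ∑' y, P x y * expV P V j y := by
  have : expV P V (j + 1) x = ∑' z, (∑' y, P x y * stepN P j y z) * V z := rfl
  rw [this]
  calc ∑' z, (∑' y, P x y * stepN P j y z) * V z
      = ∑' z, ∑' y, P x y * stepN P j y z * V z := by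
        refine tsum_congr fun z => ?_
        exact (ENNReal.tsum_mul_right).symm
    _ = ∑' y, ∑' z, P x y * stepN P j y z * V z := ENNReal.tsum_comm
    _ = ∑' y, P x y * expV P V j y := by
        refine tsum_congr fun y => ?_
        rw [expV, ← ENNReal.tsum_mul_left]
        exact tsum_congr fun z => (mul_assoc _ _ _)

lemma expV_ne_top (P : S → S → ℝ≥0∞) (V : S → ℝ≥0∞) (hVfin : ∀ x, V x ≠ ⊤)
    (hfin : ∀ (x₀ : S) (k : ℕ), (∑' y, stepN P k x₀ y * V y) ≠ ⊤ →
      (∑' y, stepN P (k + 1) x₀ y * V y) ≠ ⊤) :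
    ∀ j x, expV P V j x ≠ ⊤ := by
  intro j
  induction j with
  | zero => intro x; rw [expV_zero]; exact hVfin x
  | succ n ih => intro x; exact hfin x n (ih x)

/-- Telescoping identity for sums of `expV` over `Ico a b`. -/
lemma expV_telescope (P : S → S → ℝ≥0∞) (V : S → ℝ≥0∞) (a b : ℕ) (hab : a ≤ b) (x : S) :
    (∑' y, P x y * ∑ j ∈ Finset.Ico a b, expV P V j y) + expV P V a x
      = (∑ j ∈ Finset.Ico a b, expV P V j x) + expV P V b x := by
  induction b, hab using Nat.le_induction with
  | base => simp
  | succ b hab ih =>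
      have h1 : (∑' y, P x y * (∑ j ∈ Finset.Ico a b, expV P V j y + expV P V b y))
          = (∑' y, P x y * ∑ j ∈ Finset.Ico a b, expV P V j y)
            + expV P V (b + 1) x := by
        rw [expV_succ, ← ENNReal.tsum_add]
        exact tsum_congr fun y => (mul_add _ _ _)
      calc (∑' y, P x y * ∑ j ∈ Finset.Ico a (b + 1), expV P V j y) + expV P V a x
          = (∑' y, P x y * (∑ j ∈ Finset.Ico a b, expV P V j y + expV P V b y))
              + expV P V a x := by
              congr 1
              exact tsum_congr fun y => by rw [Finset.sum_Ico_succ_top hab]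
        _ = ((∑' y, P x y * ∑ j ∈ Finset.Ico a b, expV P V j y) + expV P V a x)
              + expV P V (b + 1) x := by rw [h1]; abel
        _ = ((∑ j ∈ Finset.Ico a b, expV P V j x) + expV P V b x) + expV P V (b + 1) x := by
              rw [ih]
        _ = (∑ j ∈ Finset.Ico a (b + 1), expV P V j x) + expV P V (b + 1) x := by
              rw [Finset.sum_Ico_succ_top hab]

/-- Stationarity extends to expectations of any nonnegative function. -/
lemma stationary_tsum (P : S → S → ℝ≥0∞) (π : S → ℝ≥0∞)
    (hπ : ∀ y, (∑' x, π x * P x y) = π y) (c : S → ℝ≥0∞) :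
    ∑' x, π x * ∑' y, P x y * c y = ∑' y, π y * c y := by
  calc ∑' x, π x * ∑' y, P x y * c y
      = ∑' x, ∑' y, π x * (P x y * c y) := tsum_congr fun x => (ENNReal.tsum_mul_left).symm
    _ = ∑' y, ∑' x, π x * (P x y * c y) := ENNReal.tsum_comm
    _ = ∑' y, ∑' x, (π x * P x y) * c y := by
        exact tsum_congr fun y => tsum_congr fun x => (mul_assoc _ _ _).symm
    _ = ∑' y, (∑' x, π x * P x y) * c y := tsum_congr fun y => ENNReal.tsum_mul_right
    _ = ∑' y, π y * c y := tsum_congr fun y => by rw [hπ y]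

end AuxLemmas

/-- a moment bound from a two-future-time drift condition. If a positive
recurrent irreducible chain satisfies
`E[V(X_{k+K}) - V(X_{k+L}) ∣ X_k = x] ≤ -f(x) + g(x)` with `V, f, g ≥ 0` and
`E[V(X_{k+1})] < ∞` whenever `E[V(X_k)] < ∞`, then in stationarity
`E[f(X̂)] ≤ E[g(X̂)]`. -/
theorem moment_bound_two_time (S : Type*) [Countable S] (P : S → S → ℝ≥0∞)
    (hP : IsTransKernel P) (hirr : MCIrreducible P) (hpos : MCPositiveRecurrent P)
    (V f g : S → ℝ≥0∞) (hVfin : ∀ x, V x ≠ ⊤)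
    (L K : ℕ) (hL : 1 ≤ L) (hLK : L < K)
    (hfin : ∀ (x₀ : S) (k : ℕ), (∑' y, stepN P k x₀ y * V y) ≠ ⊤ →
      (∑' y, stepN P (k + 1) x₀ y * V y) ≠ ⊤)
    (hdrift : ∀ x : S,
      (∑' y, stepN P K x y * V y) + f x
        ≤ (∑' y, stepN P L x y * V y) + g x)
    (π : S → ℝ≥0∞) (hπ : IsStationaryDist P π) :
    (∑' x, π x * f x) ≤ ∑' x, π x * g x := by
  classical
  set U : S → ℝ≥0∞ := fun x => ∑ j ∈ Finset.Ico L K, expV P V j x with hU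
  have hUfin : ∀ x, U x ≠ ⊤ := fun x =>
    (ENNReal.sum_lt_top.2 fun j _ =>
      (expV_ne_top P V hVfin hfin j x).lt_top).ne
  -- the one-step drift for `U`
  have hUdrift : ∀ x, (∑' y, P x y * U y) + f x ≤ U x + g x := by
    intro x
    have hEL : expV P V L x ≠ ⊤ := expV_ne_top P V hVfin hfin L x
    rw [← ENNReal.add_le_add_iff_right hEL]
    have htel := expV_telescope P V L K hLK.le x
    have hd : expV P V K x + f x ≤ expV P V L x + g x := hdrift x
    calc (∑' y, P x y * U y) + f x + expV P V L x
        = ((∑' y, P x y * U y) + expV P V L x) + f x := by abel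
      _ = (U x + expV P V K x) + f x := by rw [htel]
      _ = U x + (expV P V K x + f x) := by abel
      _ ≤ U x + (expV P V L x + g x) := add_le_add_right hd _
      _ = U x + g x + expV P V L x := by abel
  -- the truncated inequality
  have key : ∀ M : ℝ≥0∞, M ≠ ⊤ →
      (∑' x, π x * (if U x ≤ M then f x else 0)) ≤ ∑' x, π x * g x := by
    intro M hM
    set UM : S → ℝ≥0∞ := fun x => min (U x) M with hUM
    have hpt : ∀ x, (∑' y, P x y * UM y) + (if U x ≤ M then f x else 0)
        ≤ UM x + g x := by
      intro x
      by_cases h : U x ≤ M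
      · rw [if_pos h]
        have h1 : (∑' y, P x y * UM y) ≤ ∑' y, P x y * U y :=
          ENNReal.tsum_le_tsum fun y => mul_le_mul_right (min_le_left _ _) _
        have h2 : UM x = U x := min_eq_left h
        rw [h2]
        exact le_trans (add_le_add_left h1 _) (hUdrift x)
      · rw [if_neg h, add_zero]
        have h2 : UM x = M := min_eq_right (le_of_not_ge h)
        have h1 : (∑' y, P x y * UM y) ≤ M := by
          calc (∑' y, P x y * UM y) ≤ ∑' y, P x y * M :=
            ENNReal.tsum_le_tsum fun y => mul_le_mul_right (min_le_right _ _) _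
          _ = (∑' y, P x y) * M := ENNReal.tsum_mul_right
          _ = M := by rw [hP x, one_mul]
        rw [h2]
        exact le_trans h1 le_self_add
    have hsum : (∑' x, π x * (∑' y, P x y * UM y))
        + (∑' x, π x * (if U x ≤ M then f x else 0))
        ≤ (∑' x, π x * UM x) + (∑' x, π x * g x) := by
      rw [← ENNReal.tsum_add, ← ENNReal.tsum_add]
      refine ENNReal.tsum_le_tsum fun x => ?_
      rw [← mul_add, ← mul_add]
      exact mul_le_mul_right (hpt x) _
    have hstat : (∑' x, π x * (∑' y, P x y * UM y)) = ∑' x, π x * UM x :=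
      stationary_tsum P π hπ.2 UM
    have hfinUM : (∑' x, π x * UM x) ≠ ⊤ := by
      have : (∑' x, π x * UM x) ≤ M := by
        calc (∑' x, π x * UM x) ≤ ∑' x, π x * M :=
          ENNReal.tsum_le_tsum fun x => mul_le_mul_right (min_le_right _ _) _
        _ = (∑' x, π x) * M := ENNReal.tsum_mul_right
        _ = M := by rw [hπ.1, one_mul]
      exact (lt_of_le_of_lt this hM.lt_top).ne
    rw [hstat] at hsum
    exact (ENNReal.add_le_add_iff_left hfinUM).1 hsum
  -- conclude via finite subsets
  rw [ENNReal.tsum_eq_iSup_sum]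
  refine iSup_le fun s => ?_
  set M : ℝ≥0∞ := ∑ x ∈ s, U x with hM
  have hMfin : M ≠ ⊤ := (ENNReal.sum_lt_top.2 fun x _ => (hUfin x).lt_top).ne
  have hle : ∀ x ∈ s, U x ≤ M := fun x hx =>
    Finset.single_le_sum (fun _ _ => zero_le) hx
  calc ∑ x ∈ s, π x * f x
      = ∑ x ∈ s, π x * (if U x ≤ M then f x else 0) := by
        refine Finset.sum_congr rfl fun x hx => ?_
        rw [if_pos (hle x hx)]
    _ ≤ ∑' x, π x * (if U x ≤ M then f x else 0) := ENNReal.sum_le_tsum s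
    _ ≤ ∑' x, π x * g x := key M hMfin
end

section
/- Let $\{\tilde{Z}_j\}_{j=1}^N$ be random variables adapted to a filtration $\{\mathcal{F}_j\}$ such that both $\{\sum_{l=1}^j \tilde{Z}_{2l}\}_j$ and $\{\sum_{l=1}^j \tilde{Z}_{2l-1}\}_j$ are martingales with respect to the even/odd subfiltrations, and let $\mathcal{C}$ be an event on which $|\tilde{Z}_j| \le K_r$ for all $j$. Suppose there exist martingales $\{Y_j\}$ with increments bounded by $K_r$ agreeing with the partial sums on $\mathcal{C}$. Then $\Pr\left(\max_{0 \le j \le N} \left|\sum_{l=1}^j \tilde{Z}_l\right| \ge \varepsilon, \; \mathcal{C}\right) \le 4 \exp\left(-\frac{\varepsilon^2}{4 N K_r^2}\right)$ for any $\varepsilon > 0$ and even $N$. -/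
open MeasureTheory
open scoped ENNReal

open Real
open scoped NNReal

lemma exp_le_cosh_aux {K t x : ℝ} (hK : 0 < K) (hx : |x| ≤ K) :
    Real.exp (t * x) ≤ Real.cosh (t * K) + (x / K) * Real.sinh (t * K) := by
  obtain ⟨h1, h2⟩ := abs_le.1 hx
  have hK2 : (0:ℝ) < 2 * K := by linarith
  have ha : 0 ≤ (K - x) / (2 * K) := div_nonneg (by linarith) hK2.le
  have hb : 0 ≤ (K + x) / (2 * K) := div_nonneg (by linarith) hK2.le
  have hab : (K - x) / (2 * K) + (K + x) / (2 * K) = 1 := by field_simp; ring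
  have hcvx := convexOn_exp.2 (Set.mem_univ (t * (-K))) (Set.mem_univ (t * K)) ha hb hab
  have hxe : ((K - x) / (2 * K)) • (t * (-K)) + ((K + x) / (2 * K)) • (t * K) = t * x := by
    rw [smul_eq_mul, smul_eq_mul, div_mul_eq_mul_div, div_mul_eq_mul_div, ← add_div, div_eq_iff hK2.ne']; ring
  rw [hxe] at hcvx
  refine hcvx.trans (le_of_eq ?_)
  rw [Real.cosh_eq, Real.sinh_eq, smul_eq_mul, smul_eq_mul]
  rw [show t * (-K) = -(t * K) by ring]
  field_simp
  ring

lemma azuma_one_sided {Ω : Type*} [m0 : MeasurableSpace Ω] (μ : Measure Ω)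
    [IsProbabilityMeasure μ] (𝒢 : Filtration ℕ m0) (Y : ℕ → Ω → ℝ)
    (hY : Martingale Y 𝒢 μ) (K : ℝ) (hK : 0 < K)
    (hInc : ∀ j, ∀ᵐ ω ∂μ, |Y (j + 1) ω - Y j ω| ≤ K)
    (M : ℕ) (hM : 0 < M) (ε : ℝ) (hε : 0 < ε) :
    μ {ω | ∃ j ≤ M, ε ≤ Y j ω - Y 0 ω}
      ≤ ENNReal.ofReal (Real.exp (-ε ^ 2 / (2 * M * K ^ 2))) := by
  have hMR : (0:ℝ) < M := by exact_mod_cast hM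
  set t : ℝ := ε / (M * K ^ 2) with ht_def
  have ht : 0 < t := div_pos hε (by positivity)
  set g : ℕ → Ω → ℝ := fun j ω => Real.exp (t * (Y j ω - Y 0 ω)) with hg_def
  -- a.e. bound on |Y j - Y 0|
  have hbd : ∀ j, ∀ᵐ ω ∂μ, |Y j ω - Y 0 ω| ≤ j * K := by
    intro j
    induction j with
    | zero => filter_upwards with ω; simp
    | succ j ih =>
      filter_upwards [ih, hInc j] with ω h1 h2
      have := abs_sub_le (Y (j+1) ω) (Y j ω) (Y 0 ω)
      push_cast
      nlinarith
  -- adapted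
  have hgA : ∀ j, StronglyMeasurable[𝒢 j] (g j) := by
    intro j
    exact Real.continuous_exp.comp_stronglyMeasurable
      (((hY.stronglyAdapted j).sub ((hY.stronglyAdapted 0).mono (𝒢.mono (Nat.zero_le j)))).const_mul t)
  -- integrable
  have hgI : ∀ j, Integrable (g j) μ := by
    intro j
    refine Integrable.mono' (integrable_const (Real.exp (t * (j * K))))
      ((hgA j).mono (𝒢.le j)).aestronglyMeasurable ?_
    filter_upwards [hbd j] with ω h
    rw [Real.norm_eq_abs, abs_of_pos (Real.exp_pos _)]
    exact Real.exp_le_exp.2 (mul_le_mul_of_nonneg_left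
      ((le_abs_self _).trans h) ht.le)
  -- conditional bounds on the increment factor
  have key : ∀ j, (g j ≤ᵐ[μ] μ[g (j+1) | 𝒢 j]) ∧
      (μ[g (j+1) | 𝒢 j] ≤ᵐ[μ] fun ω => g j ω * Real.exp (t ^ 2 * K ^ 2 / 2)) := by
    intro j
    set D : Ω → ℝ := fun ω => Y (j+1) ω - Y j ω with hD_def
    set E : Ω → ℝ := fun ω => Real.exp (t * D ω) with hE_def
    have hDI : Integrable D μ := (hY.integrable (j+1)).sub (hY.integrable j)
    have hDm : AEStronglyMeasurable D μ :=
      ((hY.stronglyMeasurable (j+1)).mono (𝒢.le _)).aestronglyMeasurable.sub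
        ((hY.stronglyMeasurable j).mono (𝒢.le _)).aestronglyMeasurable
    have hEI : Integrable E μ := by
      refine Integrable.mono' (integrable_const (Real.exp (t * K)))
        (Real.continuous_exp.comp_aestronglyMeasurable (hDm.const_mul t)) ?_
      filter_upwards [hInc j] with ω h
      rw [Real.norm_eq_abs, abs_of_pos (Real.exp_pos _)]
      exact Real.exp_le_exp.2 (mul_le_mul_of_nonneg_left ((le_abs_self _).trans h) ht.le)
    -- conditional expectation of D is 0
    have hD0 : μ[D | 𝒢 j] =ᵐ[μ] 0 := by
      have h1 : μ[D | 𝒢 j] =ᵐ[μ] μ[Y (j+1) | 𝒢 j] - μ[Y j | 𝒢 j] :=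
        condExp_sub (hY.integrable (j+1)) (hY.integrable j) _
      have h2 := hY.condExp_ae_eq (Nat.le_succ j)
      have h3 := hY.condExp_ae_eq (le_refl j)
      filter_upwards [h1, h2, h3] with ω e1 e2 e3
      simp only [Pi.sub_apply, Pi.zero_apply] at *
      rw [e1, e2, e3]; ring
    -- g (j+1) = g j * E
    have hsplit : g (j+1) = g j * E := by
      funext ω
      simp only [hg_def, hE_def, hD_def, Pi.mul_apply]
      rw [← Real.exp_add]; ring_nf
    have hpull : μ[g (j+1) | 𝒢 j] =ᵐ[μ] g j * μ[E | 𝒢 j] := by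
      rw [hsplit]
      exact condExp_mul_of_stronglyMeasurable_left (hgA j) (hsplit ▸ hgI (j+1)) hEI
    -- lower bound : 1 ≤ condexp E
    have hlow : (fun _ : Ω => (1:ℝ)) ≤ᵐ[μ] μ[E | 𝒢 j] := by
      set F : Ω → ℝ := (fun _ : Ω => (1:ℝ)) + t • D with hF_def
      have hFI : Integrable F μ := (integrable_const (1:ℝ)).add (hDI.smul t)
      have hpt : F ≤ᵐ[μ] E := by
        filter_upwards with ω
        have := Real.add_one_le_exp (t * D ω)
        simp only [hF_def, hE_def, Pi.add_apply, Pi.smul_apply, smul_eq_mul]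
        linarith
      have hmono := condExp_mono (m := 𝒢 j) hFI hEI hpt
      have hca : μ[F | 𝒢 j] =ᵐ[μ] (fun _ => (1:ℝ)) + t • μ[D | 𝒢 j] :=
        (condExp_add (integrable_const 1) (hDI.smul t) _).trans
          (Filter.EventuallyEq.add (Filter.EventuallyEq.of_eq (condExp_const (𝒢.le j) (1:ℝ))) (condExp_smul t D _))
      filter_upwards [hmono, hca, hD0] with ω e1 e2 e3
      rw [e2] at e1
      simp [e3] at e1; simpa using e1
    -- upper bound : condexp E ≤ exp (t²K²/2)
    have hup : μ[E | 𝒢 j] ≤ᵐ[μ] fun _ => Real.exp (t ^ 2 * K ^ 2 / 2) := by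
      set G : Ω → ℝ := (fun _ : Ω => Real.cosh (t * K)) + (Real.sinh (t * K) / K) • D
        with hG_def
      have hGI : Integrable G μ :=
        (integrable_const (Real.cosh (t * K))).add (hDI.smul _)
      have hpt : E ≤ᵐ[μ] G := by
        filter_upwards [hInc j] with ω h
        have := exp_le_cosh_aux (t := t) hK h
        simp only [hE_def, hG_def, Pi.add_apply, Pi.smul_apply, smul_eq_mul]
        calc Real.exp (t * D ω) ≤ Real.cosh (t * K) + (D ω / K) * Real.sinh (t * K) := this
          _ = Real.cosh (t * K) + Real.sinh (t * K) / K * D ω := by ring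
      have hmono := condExp_mono (m := 𝒢 j) hEI hGI hpt
      have hca : μ[G | 𝒢 j]
          =ᵐ[μ] (fun _ => Real.cosh (t * K)) + (Real.sinh (t * K) / K) • μ[D | 𝒢 j] :=
        (condExp_add (integrable_const _) (hDI.smul _) _).trans
          (Filter.EventuallyEq.add (Filter.EventuallyEq.of_eq (condExp_const (𝒢.le j) _)) (condExp_smul _ D _))
      have hcosh : Real.cosh (t * K) ≤ Real.exp (t ^ 2 * K ^ 2 / 2) := by
        have := Real.cosh_le_exp_half_sq (t * K)
        convert this using 2
        ring
      filter_upwards [hmono, hca, hD0] with ω e1 e2 e3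
      rw [e2] at e1
      simp only [Pi.add_apply, Pi.smul_apply, e3, Pi.zero_apply, smul_eq_mul,
        mul_zero, add_zero] at e1
      exact e1.trans hcosh
    constructor
    · filter_upwards [hpull, hlow] with ω e1 e2
      rw [e1]
      have hg0 : 0 < g j ω := Real.exp_pos _
      simpa using mul_le_mul_of_nonneg_left e2 hg0.le
    · filter_upwards [hpull, hup] with ω e1 e2
      rw [e1]
      have hg0 : 0 < g j ω := Real.exp_pos _
      exact mul_le_mul_of_nonneg_left e2 hg0.le
  -- submartingale
  have hsub : Submartingale g 𝒢 μ :=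
    submartingale_nat hgA hgI (fun j => (key j).1)
  -- MGF bound
  have hmgf : ∀ j, ∫ ω, g j ω ∂μ ≤ Real.exp (j * (t ^ 2 * K ^ 2 / 2)) := by
    intro j
    induction j with
    | zero => simp [hg_def]
    | succ j ih =>
      have h1 : ∫ ω, g (j+1) ω ∂μ = ∫ ω, (μ[g (j+1) | 𝒢 j]) ω ∂μ :=
        (integral_condExp (𝒢.le j)).symm
      rw [h1]
      have h2 : ∫ ω, (μ[g (j+1) | 𝒢 j]) ω ∂μ
          ≤ ∫ ω, g j ω * Real.exp (t ^ 2 * K ^ 2 / 2) ∂μ :=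
        integral_mono_ae integrable_condExp ((hgI j).mul_const _) (key j).2
      rw [integral_mul_const] at h2
      refine h2.trans ?_
      have := mul_le_mul_of_nonneg_right ih (Real.exp_pos (t ^ 2 * K ^ 2 / 2)).le
      refine this.trans (le_of_eq ?_)
      rw [← Real.exp_add]
      push_cast
      ring_nf
  -- maximal inequality
  set c : ℝ≥0 := Real.toNNReal (Real.exp (t * ε)) with hc_def
  have hcpos : (0:ℝ) < Real.exp (t * ε) := Real.exp_pos _
  have hcR : (c : ℝ) = Real.exp (t * ε) := Real.coe_toNNReal _ hcpos.le
  set B := {ω | (c : ℝ) ≤ (Finset.range (M + 1)).sup' Finset.nonempty_range_add_one fun k => g k ω}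
    with hB_def
  have hAB : {ω | ∃ j ≤ M, ε ≤ Y j ω - Y 0 ω} ⊆ B := by
    rintro ω ⟨j, hjM, hjε⟩
    have hgj : Real.exp (t * ε) ≤ g j ω :=
      Real.exp_le_exp.2 (mul_le_mul_of_nonneg_left hjε ht.le)
    have hmem : j ∈ Finset.range (M + 1) := Finset.mem_range.2 (Nat.lt_succ_of_le hjM)
    have := Finset.le_sup' (fun k => g k ω) hmem
    simp only [hB_def, Set.mem_setOf_eq, hcR]
    exact hgj.trans this
  have hmax := maximal_ineq (ε := c) hsub (fun j ω => (Real.exp_pos _).le) M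
  have hint1 : ∫ ω in B, g M ω ∂μ ≤ ∫ ω, g M ω ∂μ :=
    setIntegral_le_integral (hgI M) (Filter.Eventually.of_forall fun ω => (Real.exp_pos _).le)
  have hstep : (c : ℝ≥0∞) * μ B ≤ ENNReal.ofReal (Real.exp (M * (t ^ 2 * K ^ 2 / 2))) := by
    calc (c : ℝ≥0∞) * μ B = c • μ B := rfl
      _ ≤ ENNReal.ofReal (∫ ω in B, g M ω ∂μ) := hmax
      _ ≤ ENNReal.ofReal (∫ ω, g M ω ∂μ) := ENNReal.ofReal_le_ofReal hint1
      _ ≤ _ := ENNReal.ofReal_le_ofReal (hmgf M)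
  have hc0 : (c : ℝ≥0∞) ≠ 0 := by
    simp only [ne_eq, ENNReal.coe_eq_zero]
    exact fun h => absurd (hcR ▸ congrArg NNReal.toReal h) (by simpa using hcpos.ne')
  have hctop : (c : ℝ≥0∞) ≠ ⊤ := ENNReal.coe_ne_top
  have hfinal : μ B ≤ ENNReal.ofReal (Real.exp (M * (t ^ 2 * K ^ 2 / 2))) / c := by
    rw [ENNReal.le_div_iff_mul_le (Or.inl hc0) (Or.inl hctop), mul_comm]
    exact hstep
  refine (measure_mono hAB).trans (hfinal.trans ?_)
  have : (c : ℝ≥0∞) = ENNReal.ofReal (Real.exp (t * ε)) := by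
    rw [hc_def]; simp [ENNReal.ofReal]
  rw [this, ← ENNReal.ofReal_div_of_pos hcpos, ← Real.exp_sub]
  apply ENNReal.ofReal_le_ofReal
  apply le_of_eq
  congr 1
  rw [ht_def]
  field_simp
  ring

lemma azuma_two_sided {Ω : Type*} [m0 : MeasurableSpace Ω] (μ : Measure Ω)
    [IsProbabilityMeasure μ] (𝒢 : Filtration ℕ m0) (Y : ℕ → Ω → ℝ)
    (hY : Martingale Y 𝒢 μ) (K : ℝ) (hK : 0 < K)
    (hInc : ∀ j, ∀ᵐ ω ∂μ, |Y (j + 1) ω - Y j ω| ≤ K)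
    (M : ℕ) (hM : 0 < M) (ε : ℝ) (hε : 0 < ε) :
    μ {ω | ∃ j ≤ M, ε ≤ |Y j ω - Y 0 ω|}
      ≤ ENNReal.ofReal (2 * Real.exp (-ε ^ 2 / (2 * M * K ^ 2))) := by
  have h1 := azuma_one_sided μ 𝒢 Y hY K hK hInc M hM ε hε
  have hIncN : ∀ j, ∀ᵐ ω ∂μ, |(-Y) (j + 1) ω - (-Y) j ω| ≤ K := by
    intro j
    filter_upwards [hInc j] with ω h
    have : (-Y) (j+1) ω - (-Y) j ω = -(Y (j+1) ω - Y j ω) := by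
      simp only [Pi.neg_apply]; ring
    rw [this, abs_neg]; exact h
  have h2 := azuma_one_sided μ 𝒢 (-Y) hY.neg K hK hIncN M hM ε hε
  have hsubset : {ω | ∃ j ≤ M, ε ≤ |Y j ω - Y 0 ω|}
      ⊆ {ω | ∃ j ≤ M, ε ≤ Y j ω - Y 0 ω} ∪ {ω | ∃ j ≤ M, ε ≤ (-Y) j ω - (-Y) 0 ω} := by
    rintro ω ⟨j, hj, hjε⟩
    rcases le_abs.1 hjε with h | h
    · exact Or.inl ⟨j, hj, h⟩
    · refine Or.inr ⟨j, hj, ?_⟩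
      simp only [Pi.neg_apply]
      linarith
  calc μ {ω | ∃ j ≤ M, ε ≤ |Y j ω - Y 0 ω|}
      ≤ μ ({ω | ∃ j ≤ M, ε ≤ Y j ω - Y 0 ω} ∪ {ω | ∃ j ≤ M, ε ≤ (-Y) j ω - (-Y) 0 ω}) :=
        measure_mono hsubset
    _ ≤ μ {ω | ∃ j ≤ M, ε ≤ Y j ω - Y 0 ω} + μ {ω | ∃ j ≤ M, ε ≤ (-Y) j ω - (-Y) 0 ω} :=
        measure_union_le _ _
    _ ≤ ENNReal.ofReal (Real.exp (-ε ^ 2 / (2 * M * K ^ 2)))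
        + ENNReal.ofReal (Real.exp (-ε ^ 2 / (2 * M * K ^ 2))) := add_le_add h1 h2
    _ = ENNReal.ofReal (2 * Real.exp (-ε ^ 2 / (2 * M * K ^ 2))) := by
        rw [← ENNReal.ofReal_add (Real.exp_pos _).le (Real.exp_pos _).le]; ring_nf

lemma sum_split_parity (f : ℕ → ℝ) (j : ℕ) :
    ∑ l ∈ Finset.Icc 1 j, f l
      = (∑ l ∈ Finset.Icc 1 (j / 2), f (2 * l))
        + ∑ l ∈ Finset.Icc 1 ((j + 1) / 2), f (2 * l - 1) := by
  induction j with
  | zero => simp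
  | succ j ih =>
    rw [Finset.sum_Icc_succ_top (Nat.le_add_left 1 j), ih]
    rcases Nat.even_or_odd j with ⟨m, hm⟩ | ⟨m, hm⟩
    · subst hm
      have h1 : (m + m) / 2 = m := by omega
      have h2 : (m + m + 1) / 2 = m := by omega
      have h3 : (m + m + 1 + 1) / 2 = m + 1 := by omega
      rw [h1, h2, h3, Finset.sum_Icc_succ_top (Nat.le_add_left 1 m)]
      have h4 : 2 * (m + 1) - 1 = m + m + 1 := by omega
      rw [h4]; ring
    · subst hm
      have h1 : (2 * m + 1) / 2 = m := by omega
      have h2 : (2 * m + 1 + 1) / 2 = m + 1 := by omega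
      have h3 : (2 * m + 1 + 1 + 1) / 2 = m + 1 := by omega
      rw [h1, h2, h3, Finset.sum_Icc_succ_top (Nat.le_add_left 1 m),
        Finset.sum_Icc_succ_top (Nat.le_add_left 1 m)]
      have h4 : 2 * (m + 1) = 2 * m + 1 + 1 := by omega
      rw [h4]; ring

/-- a modified Azuma–Hoeffding inequality. Both the even- and the
odd-indexed partial sums of `Z̃` are martingales (with respect to the even/odd
subfiltrations), `|Z̃_j| ≤ K_r` on the event `C`, and there exist bounded-increment
martingales agreeing with the even/odd partial sums on `C`. Then
`Pr(max_{j ≤ N} |∑_{l ≤ j} Z̃_l| ≥ ε, C) ≤ 4 exp(-ε²/(4NK_r²))`. -/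
theorem modified_azuma_hoeffding {Ω : Type*} [m0 : MeasurableSpace Ω] (μ : Measure Ω)
    [IsProbabilityMeasure μ] (ℱ : Filtration ℕ m0) (Z : ℕ → Ω → ℝ)
    (hadapted : ∀ j : ℕ, 1 ≤ j → StronglyMeasurable[ℱ j] (Z j))
    (N : ℕ) (hN : 0 < N) (hNeven : Even N) (K : ℝ) (hK : 0 < K)
    (C : Set Ω) (hCmeas : MeasurableSet C)
    (hCbdd : ∀ ω ∈ C, ∀ j ∈ Finset.Icc 1 N, |Z j ω| ≤ K)
    (𝒢e 𝒢o : Filtration ℕ m0)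
    (h𝒢e : ∀ j, 𝒢e j = ℱ (2 * j)) (h𝒢o : ∀ j, 𝒢o j = ℱ (2 * j - 1))
    (hmgE : Martingale (fun j ω => ∑ l ∈ Finset.Icc 1 j, Z (2 * l) ω) 𝒢e μ)
    (hmgO : Martingale (fun j ω => ∑ l ∈ Finset.Icc 1 j, Z (2 * l - 1) ω) 𝒢o μ)
    (Ye Yo : ℕ → Ω → ℝ)
    (hYeMg : Martingale Ye 𝒢e μ) (hYoMg : Martingale Yo 𝒢o μ)
    (hYeInc : ∀ j, ∀ᵐ ω ∂μ, |Ye (j + 1) ω - Ye j ω| ≤ K)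
    (hYoInc : ∀ j, ∀ᵐ ω ∂μ, |Yo (j + 1) ω - Yo j ω| ≤ K)
    (hYeAgree : ∀ ω ∈ C, ∀ j, Ye j ω = ∑ l ∈ Finset.Icc 1 j, Z (2 * l) ω)
    (hYoAgree : ∀ ω ∈ C, ∀ j, Yo j ω = ∑ l ∈ Finset.Icc 1 j, Z (2 * l - 1) ω)
    (ε : ℝ) (hε : 0 < ε) :
    μ (C ∩ {ω | ∃ j ≤ N, ε ≤ |∑ l ∈ Finset.Icc 1 j, Z l ω|})
      ≤ ENNReal.ofReal (4 * Real.exp (-ε ^ 2 / (4 * N * K ^ 2))) := by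
  obtain ⟨m, hm⟩ := hNeven
  have hm0 : 0 < m := by omega
  set Ae := {ω | ∃ j ≤ m, ε / 2 ≤ |Ye j ω - Ye 0 ω|} with hAe_def
  set Ao := {ω | ∃ j ≤ m, ε / 2 ≤ |Yo j ω - Yo 0 ω|} with hAo_def
  have hsubset : C ∩ {ω | ∃ j ≤ N, ε ≤ |∑ l ∈ Finset.Icc 1 j, Z l ω|} ⊆ Ae ∪ Ao := by
    rintro ω ⟨hωC, j, hjN, hjε⟩
    have hsplit := sum_split_parity (fun l => Z l ω) j
    set a := ∑ l ∈ Finset.Icc 1 (j / 2), Z (2 * l) ω with ha_def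
    set b := ∑ l ∈ Finset.Icc 1 ((j + 1) / 2), Z (2 * l - 1) ω with hb_def
    rw [hsplit] at hjε
    have habs : ε / 2 ≤ |a| ∨ ε / 2 ≤ |b| := by
      by_contra hcon
      push_neg at hcon
      have := abs_add_le a b
      linarith [hcon.1, hcon.2]
    have hj1 : j / 2 ≤ m := by omega
    have hj2 : (j + 1) / 2 ≤ m := by omega
    have hYe0 : Ye 0 ω = 0 := by rw [hYeAgree ω hωC 0]; simp
    have hYo0 : Yo 0 ω = 0 := by rw [hYoAgree ω hωC 0]; simp
    rcases habs with h | h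
    · exact Or.inl ⟨j / 2, hj1, by rw [hYeAgree ω hωC (j / 2), hYe0, sub_zero]; exact h⟩
    · exact Or.inr ⟨(j + 1) / 2, hj2, by
        rw [hYoAgree ω hωC ((j + 1) / 2), hYo0, sub_zero]; exact h⟩
  have hAe := azuma_two_sided μ 𝒢e Ye hYeMg K hK hYeInc m hm0 (ε / 2) (by positivity)
  have hAo := azuma_two_sided μ 𝒢o Yo hYoMg K hK hYoInc m hm0 (ε / 2) (by positivity)
  have hexp : -(ε / 2) ^ 2 / (2 * (m : ℝ) * K ^ 2) = -ε ^ 2 / (4 * (N : ℝ) * K ^ 2) := by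
    have hNR : (N : ℝ) = 2 * m := by rw [hm]; push_cast; ring
    have hmne : (m : ℝ) ≠ 0 := by positivity
    rw [hNR]
    field_simp
    ring
  calc μ (C ∩ {ω | ∃ j ≤ N, ε ≤ |∑ l ∈ Finset.Icc 1 j, Z l ω|})
      ≤ μ (Ae ∪ Ao) := measure_mono hsubset
    _ ≤ μ Ae + μ Ao := measure_union_le _ _
    _ ≤ ENNReal.ofReal (2 * Real.exp (-(ε / 2) ^ 2 / (2 * m * K ^ 2)))
        + ENNReal.ofReal (2 * Real.exp (-(ε / 2) ^ 2 / (2 * m * K ^ 2))) := add_le_add hAe hAo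
    _ = ENNReal.ofReal (4 * Real.exp (-ε ^ 2 / (4 * N * K ^ 2))) := by
        rw [← ENNReal.ofReal_add (by positivity) (by positivity), hexp]
        ring_nf
end

section
/- Let $G$ be a $k$-regular graph with girth strictly greater than $2\lceil \alpha \log_{k-1} n \rceil + 1$ where $G$ has $n$ vertices and $\alpha > 0$. Then any non-backtracking walk of length $T$ on $G$ visits each vertex at most $\lceil T / (\alpha \log_{k-1} n) \rceil + 1$ times; in particular, a non-backtracking walk of length $\lfloor c \log n \rfloor$ visits each vertex at most $\frac{c \log(k-1)}{2\alpha} + 1$ times (for $c > 0$ a constant and $n$ large enough). -/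
/-- `p` is a non-backtracking walk of length `T` on `G` (adjacency and no
backtracking along the first `T` steps). -/
def IsNBWalkOn {V : Type*} (G : SimpleGraph V) (T : ℕ) (p : ℕ → V) : Prop :=
  (∀ i, i < T → G.Adj (p i) (p (i + 1))) ∧ ∀ i, i + 2 ≤ T → p (i + 2) ≠ p i

namespace NBWalkAux

open SimpleGraph

variable {V : Type*} {G : SimpleGraph V}

/-- The walk along `p` starting at index `a`, taking `n` steps. -/
def walkSeg (G : SimpleGraph V) (p : ℕ → V) (a : ℕ) :
    (n : ℕ) → (∀ t, t < n → G.Adj (p (a + t)) (p (a + t + 1))) → G.Walk (p a) (p (a + n))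
  | 0, _ => Walk.nil
  | n+1, h =>
      (walkSeg G p a n (fun t ht => h t (Nat.lt_succ_of_lt ht))).concat (h n (Nat.lt_succ_self n))

lemma walkSeg_length (p : ℕ → V) (a n : ℕ) (h) :
    (walkSeg G p a n h).length = n := by
  induction n with
  | zero => rfl
  | succ n ih => simp [walkSeg, Walk.length_concat, ih]

lemma walkSeg_support (p : ℕ → V) (a n : ℕ) (h) :
    (walkSeg G p a n h).support = (List.range (n+1)).map (fun t => p (a + t)) := by
  induction n with
  | zero => simp [walkSeg, List.range_succ]
  | succ n ih => simp [walkSeg, Walk.support_concat, ih, List.range_succ]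

lemma walkSeg_edges (p : ℕ → V) (a n : ℕ) (h) :
    (walkSeg G p a n h).edges = (List.range n).map (fun t => s(p (a + t), p (a + t + 1))) := by
  induction n with
  | zero => simp [walkSeg]
  | succ n ih =>
      simp only [walkSeg, Walk.edges_concat, ih, List.range_succ, List.map_append, List.map_cons,
        List.map_nil]
      norm_num [Nat.add_assoc]

/-- A repeated vertex along a non-backtracking walk yields a cycle, so the girth
is at most the gap between the repeats. -/
lemma egirth_le_of_repeat (T : ℕ) (p : ℕ → V) (hp : IsNBWalkOn G T p)
    {i j : ℕ} (hij : i < j) (hjT : j ≤ T) (heq : p i = p j) :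
    G.egirth ≤ ((j - i : ℕ) : ℕ∞) := by
  classical
  set P : ℕ → Prop := fun d => ∃ a, i ≤ a ∧ a + d ≤ j ∧ 0 < d ∧ p a = p (a + d) with hP
  have hPji : P (j - i) := ⟨i, le_refl i, by omega, by omega,
    by rw [show i + (j-i) = j by omega]; exact heq⟩
  have hex : ∃ d, P d := ⟨j - i, hPji⟩
  set d0 := Nat.find hex with hd0
  obtain ⟨a, hia, haj, hd0pos, hpa⟩ := Nat.find_spec hex
  have hd0le : d0 ≤ j - i := Nat.find_le hPji
  -- minimality
  have hmin : ∀ s t, a ≤ s → s < t → t ≤ a + d0 → p s = p t → s = a ∧ t = a + d0 := by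
    intro s t hs hst ht hpe
    have h1 : d0 ≤ t - s := by
      rcases Nat.lt_or_ge (t - s) d0 with h | h
      · exact absurd ⟨s, by omega, by omega, by omega,
          by rw [show s + (t - s) = t by omega]; exact hpe⟩ (Nat.find_min hex h)
      · exact h
    omega
  -- adjacency along the segment
  have hadj : ∀ t, t < d0 → G.Adj (p (a + t)) (p (a + t + 1)) := by
    intro t ht
    exact hp.1 (a + t) (by omega)
  -- d0 ≥ 3
  have hpa' : p a = p (a + d0) := by rw [hd0]; exact hpa
  have hd3 : 3 ≤ d0 := by
    by_contra hlt
    push_neg at hlt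
    have hcase : d0 = 1 ∨ d0 = 2 := by omega
    rcases hcase with h | h
    · have hadj0 : G.Adj (p a) (p (a + 1)) := by simpa using hadj 0 (by omega)
      rw [h] at hpa'
      rw [← hpa'] at hadj0
      exact G.irrefl hadj0
    · have hnb := hp.2 a (by omega)
      rw [h] at hpa'
      exact hnb hpa'.symm
  -- the closed walk
  set w := (walkSeg G p a d0 hadj).copy rfl hpa'.symm with hw
  have hsupp : w.support = (List.range (d0+1)).map (fun t => p (a + t)) := by
    rw [hw, Walk.support_copy, walkSeg_support]
  have hedges : w.edges = (List.range d0).map (fun t => s(p (a + t), p (a + t + 1))) := by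
    rw [hw, Walk.edges_copy, walkSeg_edges]
  have hlen : w.length = d0 := by rw [hw, Walk.length_copy, walkSeg_length]
  have hcyc : w.IsCycle := by
    rw [Walk.isCycle_def]
    refine ⟨⟨?_⟩, ?_, ?_⟩
    · -- trail : edges nodup
      rw [hedges]
      refine List.Nodup.map_on ?_ List.nodup_range
      intro x hx y hy hxy
      simp only [List.mem_range] at hx hy
      rw [Sym2.eq_iff] at hxy
      rcases hxy with ⟨h1, h2⟩ | ⟨h1, h2⟩
      · rcases Nat.lt_trichotomy x y with h | h | h
        · obtain ⟨e1, e2⟩ := hmin (a+x) (a+y) (by omega) (by omega) (by omega) h1; omega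
        · exact h
        · obtain ⟨e1, e2⟩ := hmin (a+y) (a+x) (by omega) (by omega) (by omega) h1.symm; omega
      · rcases Nat.lt_or_ge x (y+1) with h | h
        · obtain ⟨e1, e2⟩ := hmin (a+x) (a+y+1) (by omega) (by omega) (by omega) h1
          obtain ⟨e3, e4⟩ := hmin (a+x+1) (a+y) (by omega) (by omega) (by omega) h2
          omega
        · obtain ⟨e1, e2⟩ := hmin (a+y) (a+x+1) (by omega) (by omega) (by omega) h2.symm
          obtain ⟨e3, e4⟩ := hmin (a+y+1) (a+x) (by omega) (by omega) (by omega) h1.symm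
          omega
    · -- ≠ nil
      intro hn
      have := congrArg Walk.length hn
      rw [hlen] at this
      simp at this
      omega
    · -- support tail nodup
      rw [hsupp, List.range_succ_eq_map, List.map_cons, List.tail_cons, List.map_map]
      refine List.Nodup.map_on ?_ List.nodup_range
      intro x hx y hy hxy
      simp only [List.mem_range] at hx hy
      simp only [Function.comp] at hxy
      rcases Nat.lt_trichotomy x y with h | h | h
      · obtain ⟨e1, e2⟩ := hmin (a+x+1) (a+y+1) (by omega) (by omega) (by omega)
          (by simpa [Nat.add_comm, Nat.add_assoc, Nat.add_left_comm] using hxy)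
        omega
      · exact h
      · obtain ⟨e1, e2⟩ := hmin (a+y+1) (a+x+1) (by omega) (by omega) (by omega)
          (by simpa [Nat.add_comm, Nat.add_assoc, Nat.add_left_comm] using hxy.symm)
        omega
  calc G.egirth ≤ (w.length : ℕ∞) := by
        refine iInf_le_of_le (p a) (iInf_le_of_le w (iInf_le_of_le hcyc le_rfl))
    _ ≤ ((j - i : ℕ) : ℕ∞) := by rw [hlen]; exact_mod_cast hd0le

/-- A set of naturals in `[0, T]` whose pairwise gaps are at least `g` has at most
`T / g + 1` elements. -/
lemma gap_count {s : Finset ℕ} {g T : ℕ} (hg : 0 < g) (hsub : s ⊆ Finset.range (T+1))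
    (hgap : ∀ x ∈ s, ∀ y ∈ s, x < y → g ≤ y - x) : s.card ≤ T / g + 1 := by
  have hinj : Set.InjOn (· / g) s := by
    intro x hx y hy hxy
    have hxy2 : x / g = y / g := hxy
    rcases Nat.lt_trichotomy x y with h | h | h
    · have h1 := hgap x hx y hy h
      have : x / g + 1 ≤ y / g := by
        calc x / g + 1 = (x + g) / g := by rw [Nat.add_div_right _ hg]
          _ ≤ y / g := Nat.div_le_div_right (by omega)
      omega
    · exact h
    · have h1 := hgap y hy x hx h
      have : y / g + 1 ≤ x / g := by
        calc y / g + 1 = (y + g) / g := by rw [Nat.add_div_right _ hg]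
          _ ≤ x / g := Nat.div_le_div_right (by omega)
      omega
  have hcard := Finset.card_image_of_injOn hinj
  rw [← hcard]
  have hsub2 : s.image (· / g) ⊆ Finset.range (T / g + 1) := by
    intro m hm
    simp only [Finset.mem_image] at hm
    obtain ⟨x, hx, rfl⟩ := hm
    have hxT := hsub hx
    simp only [Finset.mem_range] at hxT ⊢
    have : x / g ≤ T / g := Nat.div_le_div_right (by omega)
    omega
  calc (s.image (· / g)).card ≤ (Finset.range (T / g + 1)).card := Finset.card_le_card hsub2
    _ = T / g + 1 := Finset.card_range _

/-- Main combinatorial bound: on a graph of girth `> 2L+1`, a non-backtracking walk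
of length `T` visits each vertex at most `T / (2L+2) + 1` times. -/
lemma visits_le {V : Type} [DecidableEq V] (G : SimpleGraph V)
    (L T : ℕ) (hg : ((2 * L + 1 : ℕ) : ℕ∞) < G.egirth)
    (p : ℕ → V) (hp : IsNBWalkOn G T p) (v : V) :
    ((Finset.range (T + 1)).filter (fun i => p i = v)).card ≤ T / (2*L+2) + 1 := by
  apply gap_count (by omega) (Finset.filter_subset _ _)
  intro x hx y hy hxy
  simp only [Finset.mem_filter, Finset.mem_range] at hx hy
  have hle := egirth_le_of_repeat T p hp hxy (by omega) (hx.2.trans hy.2.symm)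
  by_contra hcon
  push_neg at hcon
  have h2 : G.egirth ≤ ((2*L+1 : ℕ) : ℕ∞) :=
    hle.trans (Nat.cast_le.mpr (by omega))
  exact absurd (lt_of_lt_of_le hg h2) (lt_irrefl _)

end NBWalkAux

/-- on a `k`-regular graph on `n` vertices of girth greater than
`2⌈α log_{k-1} n⌉ + 1`, any non-backtracking walk of length `T` visits each vertex
at most `⌈T/(α log_{k-1} n)⌉ + 1` times; in particular, a non-backtracking walk of
length `⌊c log n⌋` visits each vertex at most `c log(k-1)/(2α) + 1` times, for all
sufficiently large `n`. -/
theorem nb_walk_visit_count (k : ℕ) (hk : 3 ≤ k) (α c : ℝ) (hα : 0 < α)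
    (hc : 0 < c) :
    (∀ (V : Type) (_ : Fintype V) (_ : DecidableEq V) (G : SimpleGraph V) (_ : DecidableRel G.Adj),
      (∀ w : V, G.degree w = k) →
      ((2 * ⌈α * Real.logb ((k : ℝ) - 1) (Fintype.card V)⌉₊ + 1 : ℕ) : ℕ∞)
          < G.egirth →
      ∀ (T : ℕ) (p : ℕ → V), IsNBWalkOn G T p → ∀ v : V,
        ((Finset.range (T + 1)).filter (fun i => p i = v)).card
          ≤ ⌈(T : ℝ) / (α * Real.logb ((k : ℝ) - 1) (Fintype.card V))⌉₊ + 1) ∧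
    (∃ N₀ : ℕ, ∀ n : ℕ, N₀ ≤ n →
      ∀ (G : SimpleGraph (Fin n)) (_ : DecidableRel G.Adj),
        (∀ w : Fin n, G.degree w = k) →
        ((2 * ⌈α * Real.logb ((k : ℝ) - 1) n⌉₊ + 1 : ℕ) : ℕ∞) < G.egirth →
        ∀ p : ℕ → Fin n, IsNBWalkOn G ⌊c * Real.log n⌋₊ p → ∀ v : Fin n,
          (((Finset.range (⌊c * Real.log n⌋₊ + 1)).filter
              (fun i => p i = v)).card : ℝ)
            ≤ c * Real.log ((k : ℝ) - 1) / (2 * α) + 1) := by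
  have hk1 : (1 : ℝ) < (k : ℝ) - 1 := by
    have : (3 : ℝ) ≤ (k : ℝ) := by exact_mod_cast hk
    linarith
  constructor
  · -- Part 1
    intro V _ _ G _ hreg hgirth T p hp v
    set x := α * Real.logb ((k : ℝ) - 1) (Fintype.card V) with hxdef
    set L := ⌈x⌉₊ with hLdef
    have hcard : k < Fintype.card V := hreg v ▸ G.degree_lt_card_verts v
    have hx : 0 < x := by
      apply mul_pos hα
      apply Real.logb_pos hk1
      have : (1 : ℕ) < Fintype.card V := by omega
      exact_mod_cast this
    have hm := NBWalkAux.visits_le G L T hgirth p hp v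
    refine hm.trans (Nat.add_le_add_right ?_ 1)
    have hxL : x ≤ (L : ℝ) := Nat.le_ceil x
    have h1 : ((T / (2*L+2) : ℕ) : ℝ) ≤ (T : ℝ) / x := by
      calc ((T / (2*L+2) : ℕ) : ℝ) ≤ (T : ℝ) / ((2*L+2 : ℕ) : ℝ) := Nat.cast_div_le
        _ ≤ (T : ℝ) / x := by
            apply div_le_div_of_nonneg_left (by positivity) hx
            push_cast
            linarith
    calc T / (2*L+2) = ⌈((T / (2*L+2) : ℕ) : ℝ)⌉₊ := (Nat.ceil_natCast _).symm
      _ ≤ ⌈(T : ℝ) / x⌉₊ := Nat.ceil_mono h1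
  · -- Part 2
    refine ⟨2, fun n hn G _ hreg hgirth p hp v => ?_⟩
    set T := ⌊c * Real.log n⌋₊ with hTdef
    set x := α * Real.logb ((k : ℝ) - 1) n with hxdef
    set L := ⌈x⌉₊ with hLdef
    have hn1 : (1 : ℝ) < (n : ℝ) := by exact_mod_cast (by omega : 1 < n)
    have hlogn : 0 < Real.log n := Real.log_pos hn1
    have hlogk : 0 < Real.log ((k : ℝ) - 1) := Real.log_pos hk1
    have hx : 0 < x := mul_pos hα (Real.logb_pos hk1 hn1)
    have hxL : x ≤ (L : ℝ) := Nat.le_ceil x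
    have hm := NBWalkAux.visits_le G L T hgirth p hp v
    have hT : (T : ℝ) ≤ c * Real.log n := Nat.floor_le (by positivity)
    calc (((Finset.range (T + 1)).filter (fun i => p i = v)).card : ℝ)
        ≤ ((T / (2*L+2) + 1 : ℕ) : ℝ) := by exact_mod_cast hm
      _ = ((T / (2*L+2) : ℕ) : ℝ) + 1 := by push_cast; ring
      _ ≤ (T : ℝ) / ((2*L+2 : ℕ) : ℝ) + 1 := by
          have := (Nat.cast_div_le : ((T / (2*L+2) : ℕ) : ℝ) ≤ (T : ℝ) / ((2*L+2 : ℕ) : ℝ))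
          linarith
      _ ≤ (T : ℝ) / (2 * x) + 1 := by
          have h2 : (T : ℝ) / ((2*L+2 : ℕ) : ℝ) ≤ (T : ℝ) / (2 * x) := by
            apply div_le_div_of_nonneg_left (by positivity) (by positivity)
            push_cast
            linarith
          linarith
      _ ≤ (c * Real.log n) / (2 * x) + 1 := by
          have h3 : (T : ℝ) / (2 * x) ≤ (c * Real.log n) / (2 * x) := by
            apply div_le_div_of_nonneg_right hT (by positivity)
          linarith
      _ = c * Real.log ((k : ℝ) - 1) / (2 * α) + 1 := by
          rw [hxdef, Real.logb]
          field_simp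
end

section
/- Let $W_1, W_2$ be two independent non-backtracking random walks on a $k$-regular graph $G$ on $n$ vertices with girth greater than $2\lceil \alpha \log_{k-1} n \rceil + 1$, started from independent uniformly random directed edges. Then for any $0 \le r < s$ with $s - r \le \alpha \log_{k-1} n$, $\Pr(W_1(r) = W_1(s)) \le n^{-\alpha}$, and for all $r, s \ge 0$, $\Pr(W_1(r) = W_2(s)) \le \frac{1+n^{-1}}{n}$. -/
open MeasureTheory ProbabilityTheory
open scoped ENNReal

/-- `W` is a non-backtracking random walk on the `k`-regular graph `G` on `Fin n`
started from a uniformly random directed edge: the initial directed edge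
`(W 0, W 1)` is uniform among the `nk` directed edges, and given any admissible
history up to time `j ≥ 1`, the next vertex is uniform among the `k - 1` neighbours
of the current vertex other than the previous one. -/
def IsNBRW {n : ℕ} {Ω : Type*} [MeasurableSpace Ω] (μ : Measure Ω)
    (G : SimpleGraph (Fin n)) (k : ℕ) (W : ℕ → Ω → Fin n) : Prop :=
  (∀ i, Measurable (W i)) ∧
  (∀ u v : Fin n, G.Adj u v →
    μ {ω | W 0 ω = u ∧ W 1 ω = v} = ENNReal.ofReal (1 / ((n : ℝ) * k))) ∧
  (∀ j : ℕ, 1 ≤ j → ∀ h : ℕ → Fin n, ∀ w : Fin n,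
    G.Adj (h j) w → w ≠ h (j - 1) →
      μ ({ω | W (j + 1) ω = w} ∩ {ω | ∀ i ≤ j, W i ω = h i})
        = μ {ω | ∀ i ≤ j, W i ω = h i} / ((k : ℝ≥0∞) - 1))

set_option linter.unusedSectionVars false
set_option maxHeartbeats 1000000 in
section
namespace NBRWaux

variable {n : ℕ} {Ω : Type*} [MeasurableSpace Ω]

section basic

variable (W : ℕ → Ω → Fin n)

def Cyl (j : ℕ) (h : ℕ → Fin n) : Set Ω := {ω | ∀ i ≤ j, W i ω = h i}

def extf (j : ℕ) (f : Fin (j+1) → Fin n) : ℕ → Fin n := fun i => f ⟨min i j, by omega⟩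

lemma extf_eq {j : ℕ} (f : Fin (j+1) → Fin n) {i : ℕ} (hi : i ≤ j) :
    extf j f i = f ⟨i, by omega⟩ := by
  simp [extf, Nat.min_eq_left hi]

lemma measurable_cyl (hm : ∀ i, Measurable (W i)) (j : ℕ) (h : ℕ → Fin n) :
    MeasurableSet (Cyl W j h) := by
  have : Cyl W j h = ⋂ i ∈ Finset.range (j+1), (W i) ⁻¹' {h i} := by
    ext ω
    simp only [Cyl, Set.mem_setOf_eq, Set.mem_iInter, Finset.mem_range, Set.mem_preimage,
      Set.mem_singleton_iff]
    exact ⟨fun H i hi => H i (by omega), fun H i hi => H i (by omega)⟩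
  rw [this]
  exact Finset.measurableSet_biInter _ (fun i _ => (hm i) (measurableSet_singleton _))

lemma cyl_succ (j : ℕ) (h : ℕ → Fin n) :
    Cyl W (j+1) h = {ω | W (j+1) ω = h (j+1)} ∩ Cyl W j h := by
  ext ω
  simp only [Cyl, Set.mem_setOf_eq, Set.mem_inter_iff]
  constructor
  · intro H
    exact ⟨H (j+1) le_rfl, fun i hi => H i (by omega)⟩
  · rintro ⟨h1, h2⟩ i hi
    rcases Nat.lt_or_ge i (j+1) with h' | h'
    · exact h2 i (by omega)
    · have : i = j+1 := by omega
      rw [this]; exact h1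

lemma partition_aux (μ : Measure Ω) {γ : Type*} [Fintype γ] (X : Ω → γ) (S : Set Ω)
    (hm : ∀ c, MeasurableSet (S ∩ X ⁻¹' {c})) :
    μ S = ∑ c : γ, μ (S ∩ X ⁻¹' {c}) := by
  have hcov : S = ⋃ c : γ, (S ∩ X ⁻¹' {c}) := by
    ext ω
    simp only [Set.mem_iUnion, Set.mem_inter_iff, Set.mem_preimage, Set.mem_singleton_iff]
    exact ⟨fun hω => ⟨X ω, hω, rfl⟩, fun ⟨c, hc, _⟩ => hc⟩
  have hdis : Pairwise (Function.onFun Disjoint (fun c => S ∩ X ⁻¹' {c})) := by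
    intro c d hcd
    rw [Function.onFun, Set.disjoint_left]
    rintro ω ⟨-, hc⟩ ⟨-, hd⟩
    simp only [Set.mem_preimage, Set.mem_singleton_iff] at hc hd
    exact hcd (hc ▸ hd ▸ rfl)
  calc μ S = μ (⋃ c : γ, (S ∩ X ⁻¹' {c})) := by rw [← hcov]
    _ = ∑' c : γ, μ (S ∩ X ⁻¹' {c}) := measure_iUnion hdis hm
    _ = ∑ c : γ, μ (S ∩ X ⁻¹' {c}) := tsum_fintype _

/-- partition over cylinders -/
lemma partition_cyl (μ : Measure Ω) (hm : ∀ i, Measurable (W i)) (j : ℕ) (S : Set Ω)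
    (hS : MeasurableSet S) :
    μ S = ∑ f : Fin (j+1) → Fin n, μ (S ∩ Cyl W j (extf j f)) := by
  have key : ∀ f : Fin (j+1) → Fin n,
      (fun ω => (fun i : Fin (j+1) => W i ω)) ⁻¹' {f} = Cyl W j (extf j f) := by
    intro f
    ext ω
    simp only [Set.mem_preimage, Set.mem_singleton_iff, Cyl, Set.mem_setOf_eq, funext_iff]
    constructor
    · intro H i hi
      rw [extf_eq _ hi]
      exact H ⟨i, by omega⟩
    · intro H i
      have := H i.1 (by omega)
      rwa [extf_eq _ (by omega), Fin.eta] at this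
  have := partition_aux μ (fun ω => (fun i : Fin (j+1) => W i ω)) S
    (fun f => by rw [key]; exact hS.inter (measurable_cyl W hm j _))
  simp only [key] at this
  exact this

/-- partition over the value of `W t` -/
lemma partition_val (μ : Measure Ω) (hm : ∀ i, Measurable (W i)) (t : ℕ) (S : Set Ω)
    (hS : MeasurableSet S) :
    μ S = ∑ v : Fin n, μ (S ∩ {ω | W t ω = v}) := by
  have key : ∀ v : Fin n, (W t) ⁻¹' {v} = {ω | W t ω = v} := fun v => rfl
  have := partition_aux μ (W t) S
    (fun v => hS.inter ((hm t) (measurableSet_singleton _)))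
  simpa only [key] using this

end basic

section walklaw

variable {k : ℕ} (μ : Measure Ω) (G : SimpleGraph (Fin n)) [DecidableRel G.Adj]
  (W : ℕ → Ω → Fin n)

/-- admissible (non-backtracking path) history up to time `j` -/
def Good (j : ℕ) (h : ℕ → Fin n) : Prop :=
  (∀ i < j, G.Adj (h i) (h (i+1))) ∧ ∀ i, i + 2 ≤ j → h (i+2) ≠ h i

lemma qval (hn : 1 ≤ n) (hk : 3 ≤ k) :
    ENNReal.ofReal (1 / ((n : ℝ) * k)) = ((n * k : ℕ) : ℝ≥0∞)⁻¹ := by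
  rw [show ((n:ℝ) * k) = ((n*k : ℕ) : ℝ) by push_cast; ring, one_div,
    ENNReal.ofReal_inv_of_pos (by exact_mod_cast Nat.pos_of_ne_zero (by positivity)),
    ENNReal.ofReal_natCast]

lemma nk_ne_zero (hn : 1 ≤ n) (hk : 3 ≤ k) : ((n * k : ℕ) : ℝ≥0∞) ≠ 0 := by
  exact_mod_cast Nat.pos_of_ne_zero (by positivity) |>.ne'

lemma km1_cast (hk : 3 ≤ k) : ((k - 1 : ℕ) : ℝ≥0∞) = (k : ℝ≥0∞) - 1 := by
  rw [ENNReal.natCast_sub, Nat.cast_one]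

lemma km1_ne_zero (hk : 3 ≤ k) : (k : ℝ≥0∞) - 1 ≠ 0 := by
  have h1 : (1 : ℝ≥0∞) < (k : ℝ≥0∞) := by exact_mod_cast (by omega : 1 < k)
  exact (tsub_pos_of_lt h1).ne'

lemma km1_ne_top : (k : ℝ≥0∞) - 1 ≠ ⊤ :=
  ENNReal.sub_ne_top (ENNReal.natCast_ne_top _)

variable [IsProbabilityMeasure μ]

/-- initial distribution gives measure zero to non-edges -/
lemma init_zero (hn : 1 ≤ n) (hk : 3 ≤ k) (hreg : ∀ w : Fin n, G.degree w = k)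
    (hW : IsNBRW μ G k W) :
    ∀ u v : Fin n, ¬ G.Adj u v → μ ({ω | W 0 ω = u} ∩ {ω | W 1 ω = v}) = 0 := by
  set q : ℝ≥0∞ := ((n * k : ℕ) : ℝ≥0∞)⁻¹ with hq
  set m : Fin n → Fin n → ℝ≥0∞ := fun u v => μ ({ω | W 0 ω = u} ∩ {ω | W 1 ω = v}) with hm
  have hadjval : ∀ u v, G.Adj u v → m u v = q := by
    intro u v huv
    have := hW.2.1 u v huv
    rw [qval hn hk] at this
    show μ ({ω | W 0 ω = u} ∩ {ω | W 1 ω = v}) = q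
    rw [show ({ω | W 0 ω = u} ∩ {ω | W 1 ω = v} : Set Ω) = {ω | W 0 ω = u ∧ W 1 ω = v} from rfl]
    exact this
  have htot : (1 : ℝ≥0∞) = ∑ u : Fin n, ∑ v : Fin n, m u v := by
    have h1 : μ Set.univ = ∑ u : Fin n, μ (Set.univ ∩ {ω | W 0 ω = u}) :=
      partition_val W μ hW.1 0 Set.univ MeasurableSet.univ
    simp only [Set.univ_inter] at h1
    have h2 : ∀ u : Fin n, μ {ω | W 0 ω = u} = ∑ v : Fin n, m u v := by
      intro u
      exact partition_val W μ hW.1 1 _ ((hW.1 0) (measurableSet_singleton _))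
    rw [← measure_univ (μ := μ), h1]
    exact Finset.sum_congr rfl (fun u _ => h2 u)
  have hsplit : ∀ u v, m u v = (if G.Adj u v then q else 0) +
      (if G.Adj u v then 0 else m u v) := by
    intro u v
    by_cases h : G.Adj u v <;> simp [h, hadjval u v]
  have hadjsum : ∑ u : Fin n, ∑ v : Fin n, (if G.Adj u v then q else 0) = 1 := by
    have hinner : ∀ u : Fin n, ∑ v : Fin n, (if G.Adj u v then q else 0) = (k : ℝ≥0∞) * q := by
      intro u
      rw [← Finset.sum_filter, ← SimpleGraph.neighborFinset_eq_filter, Finset.sum_const,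
        SimpleGraph.card_neighborFinset_eq_degree, hreg, nsmul_eq_mul]
    rw [Finset.sum_congr rfl (fun u _ => hinner u), Finset.sum_const, Finset.card_univ,
      Fintype.card_fin, nsmul_eq_mul, ← mul_assoc]
    rw [show ((n : ℝ≥0∞) * k) = ((n * k : ℕ) : ℝ≥0∞) by push_cast; ring]
    exact ENNReal.mul_inv_cancel (nk_ne_zero hn hk) (ENNReal.natCast_ne_top _)
  have hkey : ∑ u : Fin n, ∑ v : Fin n, (if G.Adj u v then 0 else m u v) = 0 := by
    have := htot
    conv_lhs at this => rw [show (1:ℝ≥0∞) = 1 + 0 by ring]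
    rw [Finset.sum_congr rfl (fun u _ => Finset.sum_congr rfl (fun v _ => hsplit u v))] at this
    simp only [Finset.sum_add_distrib] at this
    rw [hadjsum] at this
    exact ((ENNReal.add_right_inj ENNReal.one_ne_top).mp this).symm
  intro u v huv
  have h1 := (Finset.sum_eq_zero_iff.mp hkey) u (Finset.mem_univ u)
  have h2 := (Finset.sum_eq_zero_iff.mp h1) v (Finset.mem_univ v)
  simpa [huv] using h2

/-- inadmissible transitions have measure zero -/
lemma trans_zero (hn : 1 ≤ n) (hk : 3 ≤ k) (hreg : ∀ w : Fin n, G.degree w = k)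
    (hW : IsNBRW μ G k W) :
    ∀ j, 1 ≤ j → ∀ h : ℕ → Fin n, Good G j h → ∀ w : Fin n,
      ¬ (G.Adj (h j) w ∧ w ≠ h (j-1)) →
      μ ({ω | W (j+1) ω = w} ∩ Cyl W j h) = 0 := by
  intro j hj h hGood w hw
  set A : Finset (Fin n) := (G.neighborFinset (h j)).erase (h (j-1)) with hA
  have hadjA : ∀ x ∈ A, G.Adj (h j) x ∧ x ≠ h (j-1) := by
    intro x hx
    rw [hA, Finset.mem_erase, SimpleGraph.mem_neighborFinset] at hx
    exact ⟨hx.2, hx.1⟩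
  have hwA : w ∉ A := fun hx => hw (hadjA w hx)
  have hmem : h (j-1) ∈ G.neighborFinset (h j) := by
    rw [SimpleGraph.mem_neighborFinset]
    have := hGood.1 (j-1) (by omega)
    rw [show j - 1 + 1 = j by omega] at this
    exact this.symm
  have hcard : A.card = k - 1 := by
    rw [hA, Finset.card_erase_of_mem hmem, SimpleGraph.card_neighborFinset_eq_degree, hreg]
  have htot := partition_val W μ hW.1 (j+1) (Cyl W j h) (measurable_cyl W hW.1 j h)
  have hval : ∀ x ∈ A, μ (Cyl W j h ∩ {ω | W (j+1) ω = x})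
      = μ (Cyl W j h) / ((k : ℝ≥0∞) - 1) := by
    intro x hx
    obtain ⟨hadj, hne⟩ := hadjA x hx
    have := hW.2.2 j hj h x hadj hne
    rw [Set.inter_comm]
    exact this
  have hAsum : ∑ x ∈ A, μ (Cyl W j h ∩ {ω | W (j+1) ω = x}) = μ (Cyl W j h) := by
    rw [Finset.sum_congr rfl hval, Finset.sum_const, hcard, nsmul_eq_mul, km1_cast hk]
    exact ENNReal.mul_div_cancel (km1_ne_zero hk) km1_ne_top
  have hsplit := Finset.sum_sdiff (f := fun v => μ (Cyl W j h ∩ {ω | W (j+1) ω = v}))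
    (Finset.subset_univ A)
  rw [hAsum, ← htot] at hsplit
  have hrest : ∑ x ∈ Finset.univ \ A, μ (Cyl W j h ∩ {ω | W (j+1) ω = x}) = 0 := by
    have hfin : μ (Cyl W j h) ≠ ⊤ := measure_ne_top μ _
    have : μ (Cyl W j h) + ∑ x ∈ Finset.univ \ A, μ (Cyl W j h ∩ {ω | W (j+1) ω = x})
        = μ (Cyl W j h) + 0 := by rw [add_zero, add_comm]; exact hsplit
    exact (ENNReal.add_right_inj hfin).mp this
  have := (Finset.sum_eq_zero_iff.mp hrest) w (by rw [Finset.mem_sdiff]; exact ⟨Finset.mem_univ w, hwA⟩)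
  rw [Set.inter_comm] at this
  exact this

/-- cylinders of non-admissible histories are null -/
lemma bad_zero (hn : 1 ≤ n) (hk : 3 ≤ k) (hreg : ∀ w : Fin n, G.degree w = k)
    (hW : IsNBRW μ G k W) :
    ∀ j, 1 ≤ j → ∀ h : ℕ → Fin n, ¬ Good G j h → μ (Cyl W j h) = 0 := by
  intro j
  induction j with
  | zero => omega
  | succ j ih =>
    intro _ h hbad
    rcases Nat.eq_zero_or_pos j with rfl | hj
    · -- j + 1 = 1
      have hadj : ¬ G.Adj (h 0) (h 1) := by
        intro hadj
        exact hbad ⟨fun i hi => by interval_cases i; exact hadj, fun i hi => by omega⟩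
      have : Cyl W 1 h = {ω | W 0 ω = h 0} ∩ {ω | W 1 ω = h 1} := by
        ext ω
        simp only [Cyl, Set.mem_setOf_eq, Set.mem_inter_iff]
        constructor
        · intro H; exact ⟨H 0 (by omega), H 1 le_rfl⟩
        · rintro ⟨h1, h2⟩ i hi; interval_cases i; exacts [h1, h2]
      rw [this]
      exact init_zero μ G W hn hk hreg hW (h 0) (h 1) hadj
    · by_cases hgood : Good G j h
      · have hlast : ¬ (G.Adj (h j) (h (j+1)) ∧ h (j+1) ≠ h (j-1)) := by
          rintro ⟨hadj, hne⟩
          apply hbad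
          constructor
          · intro i hi
            rcases Nat.lt_or_ge i j with h' | h'
            · exact hgood.1 i h'
            · have : i = j := by omega
              rw [this]; exact hadj
          · intro i hi
            rcases Nat.lt_or_ge (i+2) (j+1) with h' | h'
            · exact hgood.2 i (by omega)
            · have hij : i = j - 1 := by omega
              rw [hij, show j - 1 + 2 = j + 1 by omega]
              intro hcon
              exact hne hcon
        rw [cyl_succ]
        exact trans_zero μ G W hn hk hreg hW j hj h hgood (h (j+1)) hlast
      · refine measure_mono_null ?_ (ih hj h hgood)
        intro ω hω i hi
        exact hω i (by omega)

/-- the directed edge marginal at every time is uniform on directed edges -/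
lemma edge_law (hn : 1 ≤ n) (hk : 3 ≤ k) (hreg : ∀ w : Fin n, G.degree w = k)
    (hW : IsNBRW μ G k W) :
    ∀ j, ∀ v w : Fin n, μ ({ω | W j ω = v} ∩ {ω | W (j+1) ω = w})
      = if G.Adj v w then ((n * k : ℕ) : ℝ≥0∞)⁻¹ else 0 := by
  intro j
  induction j with
  | zero =>
    intro v w
    by_cases hadj : G.Adj v w
    · rw [if_pos hadj, ← qval hn hk,
        show ({ω | W 0 ω = v} ∩ {ω | W 1 ω = w} : Set Ω) = {ω | W 0 ω = v ∧ W 1 ω = w} from rfl]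
      exact hW.2.1 v w hadj
    · rw [if_neg hadj]
      exact init_zero μ G W hn hk hreg hW v w hadj
  | succ j ih =>
    intro v w
    classical
    set q : ℝ≥0∞ := ((n * k : ℕ) : ℝ≥0∞)⁻¹ with hqdef
    set S : Set Ω := {ω | W (j+1) ω = v} ∩ {ω | W (j+2) ω = w} with hS
    have hmS : MeasurableSet S :=
      ((hW.1 (j+1)) (measurableSet_singleton v)).inter ((hW.1 (j+2)) (measurableSet_singleton w))
    have hpart := partition_cyl W μ hW.1 (j+1) S hmS
    have hterm : ∀ f : Fin (j+2) → Fin n,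
        μ (S ∩ Cyl W (j+1) (extf (j+1) f))
        = if (extf (j+1) f (j+1) = v ∧ extf (j+1) f j ≠ w ∧ Good G (j+1) (extf (j+1) f)
            ∧ G.Adj v w)
          then μ (Cyl W (j+1) (extf (j+1) f)) / ((k : ℝ≥0∞) - 1) else 0 := by
      intro f
      set h := extf (j+1) f with hh
      by_cases hv : h (j+1) = v
      · by_cases hGood : Good G (j+1) h
        · by_cases hadm : G.Adj v w ∧ h j ≠ w
          · rw [if_pos ⟨hv, hadm.2, hGood, hadm.1⟩]
            have hsub : S ∩ Cyl W (j+1) h = {ω | W (j+2) ω = w} ∩ Cyl W (j+1) h := by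
              ext ω
              simp only [hS, Set.mem_inter_iff, Set.mem_setOf_eq]
              constructor
              · rintro ⟨⟨-, h2⟩, hc⟩; exact ⟨h2, hc⟩
              · rintro ⟨h2, hc⟩; exact ⟨⟨by rw [hc (j+1) le_rfl, hv], h2⟩, hc⟩
            rw [hsub]
            have := hW.2.2 (j+1) (by omega) h w (by rw [hv]; exact hadm.1)
              (by simp only [Nat.add_sub_cancel]; exact hadm.2.symm)
            exact this
          · rw [if_neg (by tauto)]
            have hbad : ¬ (G.Adj (h (j+1)) w ∧ w ≠ h ((j+1)-1)) := by
              rw [hv]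
              rintro ⟨h1, h2⟩
              simp only [Nat.add_sub_cancel] at h2
              exact hadm ⟨h1, h2.symm⟩
            have h0 := trans_zero μ G W hn hk hreg hW (j+1) (by omega) h hGood w hbad
            refine measure_mono_null ?_ h0
            rintro ω ⟨⟨-, h2⟩, hc⟩
            exact ⟨h2, hc⟩
        · rw [if_neg (by tauto)]
          exact measure_mono_null Set.inter_subset_right
            (bad_zero μ G W hn hk hreg hW (j+1) (by omega) h hGood)
      · rw [if_neg (by tauto)]
        have : S ∩ Cyl W (j+1) h = ∅ := by
          ext ω
          simp only [hS, Set.mem_inter_iff, Set.mem_setOf_eq, Set.mem_empty_iff_false,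
            iff_false, not_and]
          rintro ⟨hv', -⟩ hc
          exact absurd (by rw [← hv', hc (j+1) le_rfl]) hv
        rw [this, measure_empty]
    rw [Finset.sum_congr rfl (fun f _ => hterm f)] at hpart
    by_cases hadj : G.Adj v w
    · rw [if_pos hadj]
      have hstep1 : ∀ f : Fin (j+2) → Fin n,
          (if (extf (j+1) f (j+1) = v ∧ extf (j+1) f j ≠ w ∧ Good G (j+1) (extf (j+1) f)
            ∧ G.Adj v w)
          then μ (Cyl W (j+1) (extf (j+1) f)) / ((k : ℝ≥0∞) - 1) else 0)
          = (if (extf (j+1) f (j+1) = v ∧ extf (j+1) f j ≠ w)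
              then μ (Cyl W (j+1) (extf (j+1) f)) else 0) / ((k : ℝ≥0∞) - 1) := by
        intro f
        by_cases hGood : Good G (j+1) (extf (j+1) f)
        · by_cases hc : extf (j+1) f (j+1) = v ∧ extf (j+1) f j ≠ w
          · rw [if_pos ⟨hc.1, hc.2, hGood, hadj⟩, if_pos hc]
          · rw [if_neg (by tauto), if_neg hc, ENNReal.zero_div]
        · rw [if_neg (by tauto)]
          by_cases hc : extf (j+1) f (j+1) = v ∧ extf (j+1) f j ≠ w
          · rw [if_pos hc, bad_zero μ G W hn hk hreg hW (j+1) (by omega) _ hGood,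
              ENNReal.zero_div]
          · rw [if_neg hc, ENNReal.zero_div]
      rw [Finset.sum_congr rfl (fun f _ => hstep1 f)] at hpart
      simp only [div_eq_mul_inv] at hpart
      rw [← Finset.sum_mul] at hpart
      -- identify the remaining sum with μ (A \ B)
      set A : Set Ω := {ω | W (j+1) ω = v} with hA
      set B : Set Ω := {ω | W j ω = w} with hB
      have hmA : MeasurableSet A := (hW.1 (j+1)) (measurableSet_singleton v)
      have hmB : MeasurableSet B := (hW.1 j) (measurableSet_singleton w)
      have hdiff := partition_cyl W μ hW.1 (j+1) (A \ B) (hmA.diff hmB)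
      have hterm2 : ∀ f : Fin (j+2) → Fin n,
          μ ((A \ B) ∩ Cyl W (j+1) (extf (j+1) f))
          = if (extf (j+1) f (j+1) = v ∧ extf (j+1) f j ≠ w)
            then μ (Cyl W (j+1) (extf (j+1) f)) else 0 := by
        intro f
        set h := extf (j+1) f with hh
        by_cases hc : h (j+1) = v ∧ h j ≠ w
        · rw [if_pos hc]
          congr 1
          ext ω
          simp only [hA, hB, Set.mem_inter_iff, Set.mem_diff, Set.mem_setOf_eq]
          constructor
          · rintro ⟨-, hcyl⟩; exact hcyl
          · intro hcyl
            exact ⟨⟨by rw [hcyl (j+1) le_rfl, hc.1], fun hcon => hc.2 (by rw [← hcyl j (by omega), hcon])⟩, hcyl⟩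
        · rw [if_neg hc]
          have : (A \ B) ∩ Cyl W (j+1) h = ∅ := by
            ext ω
            simp only [hA, hB, Set.mem_inter_iff, Set.mem_diff, Set.mem_setOf_eq,
              Set.mem_empty_iff_false, iff_false, not_and]
            rintro ⟨hv', hnb⟩ hcyl
            exact hc ⟨by rw [← hv', hcyl (j+1) le_rfl], fun hcon => hnb (by rw [← hcon, hcyl j (by omega)])⟩
          rw [this, measure_empty]
      rw [Finset.sum_congr rfl (fun f _ => hterm2 f)] at hdiff
      rw [← hdiff] at hpart
      -- compute μ (A \ B)
      have hAB : μ (A ∩ B) = q := by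
        rw [Set.inter_comm, show (B ∩ A : Set Ω) = {ω | W j ω = w} ∩ {ω | W (j+1) ω = v} from rfl,
          ih w v, if_pos hadj.symm]
      have hAtot : μ A = (k : ℝ≥0∞) * q := by
        have := partition_val W μ hW.1 j A hmA
        have heach : ∀ u : Fin n, μ (A ∩ {ω | W j ω = u})
            = if G.Adj v u then q else 0 := by
          intro u
          rw [Set.inter_comm,
            show ({ω | W j ω = u} ∩ A : Set Ω) = {ω | W j ω = u} ∩ {ω | W (j+1) ω = v} from rfl,
            ih u v]
          congr 1
          rw [G.adj_comm]
        rw [this, Finset.sum_congr rfl (fun u _ => heach u), ← Finset.sum_filter,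
          ← SimpleGraph.neighborFinset_eq_filter, Finset.sum_const,
          SimpleGraph.card_neighborFinset_eq_degree, hreg, nsmul_eq_mul]
      have hsum : μ (A ∩ B) + μ (A \ B) = μ A := measure_inter_add_diff A hmB
      rw [hAB, hAtot] at hsum
      have hqtop : q ≠ ⊤ := ENNReal.inv_ne_top.mpr (nk_ne_zero hn hk)
      have hk' : (k : ℝ≥0∞) = ((k - 1 : ℕ) : ℝ≥0∞) + 1 := by
        rw [show ((k:ℝ≥0∞)) = (((k - 1) + 1 : ℕ) : ℝ≥0∞) by rw [show k - 1 + 1 = k by omega]]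
        push_cast
        ring
      have hdiffval : μ (A \ B) = ((k - 1 : ℕ) : ℝ≥0∞) * q := by
        rw [hk', add_mul, one_mul, add_comm (((k - 1 : ℕ) : ℝ≥0∞) * q) q] at hsum
        exact (ENNReal.add_right_inj hqtop).mp hsum
      rw [hdiffval, km1_cast hk] at hpart
      rw [hpart, mul_comm ((k : ℝ≥0∞) - 1) q, mul_assoc,
        ENNReal.mul_inv_cancel (km1_ne_zero hk) km1_ne_top, mul_one]
    · rw [if_neg hadj]
      rw [hpart]
      apply Finset.sum_eq_zero
      intro f _
      rw [if_neg (by tauto)]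

/-- each `W t` is uniform on vertices -/
lemma marginal (hn : 1 ≤ n) (hk : 3 ≤ k) (hreg : ∀ w : Fin n, G.degree w = k)
    (hW : IsNBRW μ G k W) :
    ∀ t, ∀ v : Fin n, μ {ω | W t ω = v} = ((n : ℕ) : ℝ≥0∞)⁻¹ := by
  intro t v
  have hm : MeasurableSet {ω | W t ω = v} := (hW.1 t) (measurableSet_singleton v)
  have := partition_val W μ hW.1 (t+1) _ hm
  have heach : ∀ u : Fin n, μ ({ω | W t ω = v} ∩ {ω | W (t+1) ω = u})
      = if G.Adj v u then ((n * k : ℕ) : ℝ≥0∞)⁻¹ else 0 := fun u =>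
    edge_law μ G W hn hk hreg hW t v u
  rw [this, Finset.sum_congr rfl (fun u _ => heach u), ← Finset.sum_filter,
    ← SimpleGraph.neighborFinset_eq_filter, Finset.sum_const,
    SimpleGraph.card_neighborFinset_eq_degree, hreg, nsmul_eq_mul]
  rw [Nat.cast_mul, ENNReal.mul_inv (Or.inl (by exact_mod_cast (by omega : n ≠ 0)))
    (Or.inl (ENNReal.natCast_ne_top _))]
  rw [← mul_assoc, mul_comm (k : ℝ≥0∞) ((n : ℝ≥0∞))⁻¹, mul_assoc,
    ENNReal.mul_inv_cancel (by exact_mod_cast (by omega : k ≠ 0)) (ENNReal.natCast_ne_top _),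
    mul_one]

end walklaw

section graph


variable {n : ℕ} (G : SimpleGraph (Fin n))

def toWalk (h : ℕ → Fin n) : (m a : ℕ) → (∀ i < m, G.Adj (h (a+i)) (h (a+i+1))) →
    G.Walk (h a) (h (a+m))
  | 0, _, _ => SimpleGraph.Walk.nil
  | (m+1), a, H => (toWalk h m a (fun i hi => H i (by omega))).concat (H m (by omega))

lemma length_toWalk (h : ℕ → Fin n) : ∀ (m a : ℕ) (H : ∀ i < m, G.Adj (h (a+i)) (h (a+i+1))),
    (toWalk G h m a H).length = m
  | 0, _, _ => rfl
  | (m+1), a, H => by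
      rw [toWalk, SimpleGraph.Walk.length_concat, length_toWalk]

lemma support_toWalk (h : ℕ → Fin n) : ∀ (m a : ℕ) (H : ∀ i < m, G.Adj (h (a+i)) (h (a+i+1))),
    (toWalk G h m a H).support = (List.range (m+1)).map (fun i => h (a+i))
  | 0, a, _ => by simp [toWalk, List.range_succ]
  | (m+1), a, H => by
      rw [toWalk, SimpleGraph.Walk.support_concat, support_toWalk]
      conv_rhs => rw [List.range_succ]
      simp

lemma edges_toWalk (h : ℕ → Fin n) : ∀ (m a : ℕ) (H : ∀ i < m, G.Adj (h (a+i)) (h (a+i+1))),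
    (toWalk G h m a H).edges = (List.range m).map (fun i => s(h (a+i), h (a+i+1)))
  | 0, a, _ => by simp [toWalk]
  | (m+1), a, H => by
      rw [toWalk, SimpleGraph.Walk.edges_concat, edges_toWalk]
      conv_rhs => rw [List.range_succ]
      simp
      exact Or.inl rfl

lemma no_return {h : ℕ → Fin n} {r s : ℕ} (hrs : r < s)
    (hadj : ∀ i < s, G.Adj (h i) (h (i+1)))
    (hnb : ∀ i, i + 2 ≤ s → h (i+2) ≠ h i)
    (hg : ((s - r : ℕ) : ℕ∞) < G.egirth) : h r ≠ h s := by
  intro heq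
  classical
  have hex : ∃ d, ∃ a b : ℕ, r ≤ a ∧ a < b ∧ b ≤ s ∧ b - a = d ∧ h a = h b :=
    ⟨s - r, r, s, le_rfl, hrs, le_rfl, rfl, heq⟩
  obtain ⟨a, b, har, hab, hbs, hd, hhab⟩ := Nat.find_spec hex
  set d := Nat.find hex with hdd
  have key : ∀ i j, r ≤ i → i < j → j ≤ s → h i = h j → d ≤ j - i := by
    intro i j hi hij hjs he
    by_contra hlt
    exact Nat.find_min hex (by omega) ⟨i, j, hi, hij, hjs, rfl, he⟩
  have inj : ∀ i j, a ≤ i → i < j → j ≤ b → h i = h j → i = a ∧ j = b := by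
    intro i j hi hij hjb he
    have := key i j (le_trans har hi) hij (le_trans hjb hbs) he
    omega
  have hd3 : 3 ≤ d := by
    rcases Nat.lt_or_ge d 3 with hlt | hge
    · interval_cases d
      · omega
      · exfalso
        have hb : b = a + 1 := by omega
        have := hadj a (by omega)
        rw [← hb, ← hhab] at this
        exact G.loopless.irrefl _ this
      · exfalso
        have hb : b = a + 2 := by omega
        exact hnb a (by omega) (by rw [hb] at hhab; exact hhab.symm)
    · exact hge
  have H : ∀ i < d, G.Adj (h (a+i)) (h (a+i+1)) := fun i hi => hadj (a+i) (by omega)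
  have hend : h (a + d) = h a := by
    rw [show a + d = b by omega]; exact hhab.symm
  set c := (toWalk G h d a H).copy rfl hend with hc
  have hclen : c.length = d := by
    rw [hc, SimpleGraph.Walk.length_copy, length_toWalk]
  have hcyc : c.IsCycle := by
    rw [SimpleGraph.Walk.isCycle_def]
    refine ⟨⟨?_⟩, ?_, ?_⟩
    · rw [hc, SimpleGraph.Walk.edges_copy, edges_toWalk]
      refine List.Nodup.map_on ?_ List.nodup_range
      intro i hi j hj he
      rw [List.mem_range] at hi hj
      rcases Sym2.eq_iff.mp he with ⟨h1, h2⟩ | ⟨h1, h2⟩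
      · -- h(a+i)=h(a+j), h(a+i+1)=h(a+j+1)
        rcases lt_trichotomy i j with hij | hij | hij
        · have := inj (a+i) (a+j) (by omega) (by omega) (by omega) h1; omega
        · exact hij
        · have := inj (a+j) (a+i) (by omega) (by omega) (by omega) h1.symm; omega
      · -- h(a+i)=h(a+j+1), h(a+i+1)=h(a+j)
        exfalso
        rcases lt_trichotomy i (j+1) with hij | hij | hij
        · have h0 := inj (a+i) (a+j+1) (by omega) (by omega) (by omega) h1
          -- i = 0, j+1 = d
          have h3 : h (a+1) = h (a + (d-1)) := by
            rw [show a + 1 = a + i + 1 from by omega,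
              show a + (d-1) = a + j from by omega]; exact h2
          have := inj (a+1) (a+(d-1)) (by omega) (by omega) (by omega) h3
          omega
        · -- i = j+1 : h (a+j+2) = h (a+j)
          have h3 : h (a+j) = h (a+j+2) := by
            rw [show a + j + 2 = a + i + 1 from by omega]; exact h2.symm
          have := inj (a+j) (a+j+2) (by omega) (by omega) (by omega) h3
          omega
        · have := inj (a+j+1) (a+i) (by omega) (by omega) (by omega) h1.symm
          omega
    · intro hnil
      rw [hnil] at hclen
      simp at hclen
      omega
    · rw [hc, SimpleGraph.Walk.support_copy, support_toWalk,
        List.range_succ_eq_map, List.map_cons, List.tail_cons, List.map_map]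
      refine List.Nodup.map_on ?_ List.nodup_range
      intro i hi j hj he
      rw [List.mem_range] at hi hj
      simp only [Function.comp] at he
      rcases lt_trichotomy i j with hij | hij | hij
      · have := inj (a+(i+1)) (a+(j+1)) (by omega) (by omega) (by omega) he; omega
      · exact hij
      · have := inj (a+(j+1)) (a+(i+1)) (by omega) (by omega) (by omega) he.symm; omega
  have hle : G.egirth ≤ c.length := (SimpleGraph.le_egirth.mp le_rfl) _ c hcyc
  rw [hclen] at hle
  have hds : d ≤ s - r :=
    Nat.find_min' hex ⟨r, s, le_rfl, hrs, le_rfl, rfl, heq⟩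
  have : (d : ℕ∞) ≤ ((s - r : ℕ) : ℕ∞) := Nat.cast_le.mpr hds
  exact absurd (lt_of_le_of_lt (le_trans hle this) hg) (lt_irrefl _)


end graph

end NBRWaux
end

/-- collision probabilities for two independent non-backtracking
random walks on a `k`-regular graph on `n` vertices with girth greater than
`2⌈α log_{k-1} n⌉ + 1`, started from independent uniform directed edges: a single
walk revisits a vertex within `α log_{k-1} n` steps with probability at most
`n^{-α}`, and two independent walks collide at any fixed pair of times with
probability at most `(1 + n⁻¹)/n`. -/
theorem nbrw_collision_bounds (n k : ℕ) (hn : 1 ≤ n) (hk : 3 ≤ k) (α : ℝ)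
    (hα : 0 < α) (G : SimpleGraph (Fin n)) [DecidableRel G.Adj]
    (hreg : ∀ w : Fin n, G.degree w = k)
    (hgirth : ((2 * ⌈α * Real.logb ((k : ℝ) - 1) n⌉₊ + 1 : ℕ) : ℕ∞) < G.egirth)
    {Ω : Type*} [MeasurableSpace Ω] (μ : Measure Ω) [IsProbabilityMeasure μ]
    (W₁ W₂ : ℕ → Ω → Fin n)
    (hW₁ : IsNBRW μ G k W₁) (hW₂ : IsNBRW μ G k W₂)
    (hindep : IndepFun (fun ω i => W₁ i ω) (fun ω i => W₂ i ω) μ) :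
    (∀ r s : ℕ, r < s → (s : ℝ) - r ≤ α * Real.logb ((k : ℝ) - 1) n →
      μ {ω | W₁ r ω = W₁ s ω} ≤ ENNReal.ofReal ((n : ℝ) ^ (-α))) ∧
    (∀ r s : ℕ,
      μ {ω | W₁ r ω = W₂ s ω} ≤ ENNReal.ofReal ((1 + 1 / (n : ℝ)) / n)) := by
  classical
  constructor
  · -- single-walk no-return bound
    intro r s hrs hbound
    set S : Set Ω := {ω | W₁ r ω = W₁ s ω} with hSdef
    have hmS : MeasurableSet S := by
      have : S = ⋃ v : Fin n, ({ω | W₁ r ω = v} ∩ {ω | W₁ s ω = v}) := by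
        ext ω
        simp only [hSdef, Set.mem_setOf_eq, Set.mem_iUnion, Set.mem_inter_iff]
        exact ⟨fun h => ⟨W₁ s ω, h, rfl⟩, fun ⟨v, h1, h2⟩ => by rw [h1, h2]⟩
      rw [this]
      exact MeasurableSet.iUnion fun v =>
        ((hW₁.1 r) (measurableSet_singleton v)).inter ((hW₁.1 s) (measurableSet_singleton v))
    have hpart := NBRWaux.partition_cyl W₁ μ hW₁.1 s S hmS
    have hzero : ∀ f : Fin (s+1) → Fin n, μ (S ∩ NBRWaux.Cyl W₁ s (NBRWaux.extf s f)) = 0 := by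
      intro f
      set h := NBRWaux.extf s f with hh
      by_cases hGood : NBRWaux.Good G s h
      · have hg : ((s - r : ℕ) : ℕ∞) < G.egirth := by
          have hnat : s - r ≤ ⌈α * Real.logb ((k : ℝ) - 1) n⌉₊ := by
            have h1 : ((s - r : ℕ) : ℝ) ≤ α * Real.logb ((k : ℝ) - 1) n := by
              rw [Nat.cast_sub (le_of_lt hrs)]
              exact hbound
            exact_mod_cast h1.trans (Nat.le_ceil _)
          exact lt_of_le_of_lt
            ((Nat.cast_le (α := ℕ∞)).mpr (by omega : s - r ≤ 2 * ⌈α * Real.logb ((k : ℝ) - 1) n⌉₊ + 1))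
            hgirth
        have hne : h r ≠ h s := NBRWaux.no_return G hrs hGood.1 hGood.2 hg
        have : S ∩ NBRWaux.Cyl W₁ s h = ∅ := by
          ext ω
          simp only [hSdef, Set.mem_inter_iff, Set.mem_setOf_eq, Set.mem_empty_iff_false,
            iff_false, not_and]
          intro heq hcyl
          exact hne (by rw [← hcyl r (le_of_lt hrs), ← hcyl s le_rfl, heq])
        rw [this, measure_empty]
      · exact measure_mono_null Set.inter_subset_right
          (NBRWaux.bad_zero μ G W₁ hn hk hreg hW₁ s (by omega) h hGood)
    rw [hpart, Finset.sum_congr rfl (fun f _ => hzero f), Finset.sum_const, smul_zero]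
    exact zero_le
  · -- two-walk collision bound
    intro r s
    have hpart := NBRWaux.partition_aux μ (W₁ r) {ω | W₁ r ω = W₂ s ω}
      (fun v => by
        have : {ω | W₁ r ω = W₂ s ω} ∩ (W₁ r) ⁻¹' {v}
            = {ω | W₁ r ω = v} ∩ {ω | W₂ s ω = v} := by
          ext ω
          simp only [Set.mem_inter_iff, Set.mem_setOf_eq, Set.mem_preimage,
            Set.mem_singleton_iff]
          constructor
          · rintro ⟨h1, h2⟩; exact ⟨h2, by rw [← h1, h2]⟩
          · rintro ⟨h1, h2⟩; exact ⟨by rw [h1, h2], h1⟩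
        rw [this]
        exact ((hW₁.1 r) (measurableSet_singleton v)).inter
          ((hW₂.1 s) (measurableSet_singleton v)))
    have hterm : ∀ v : Fin n, μ ({ω | W₁ r ω = W₂ s ω} ∩ (W₁ r) ⁻¹' {v})
        = ((n : ℕ) : ℝ≥0∞)⁻¹ * ((n : ℕ) : ℝ≥0∞)⁻¹ := by
      intro v
      have hset : {ω | W₁ r ω = W₂ s ω} ∩ (W₁ r) ⁻¹' {v}
          = (fun ω => (fun i => W₁ i ω)) ⁻¹' {g : ℕ → Fin n | g r = v}
            ∩ (fun ω => (fun i => W₂ i ω)) ⁻¹' {g : ℕ → Fin n | g s = v} := by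
        ext ω
        simp only [Set.mem_inter_iff, Set.mem_setOf_eq, Set.mem_preimage,
          Set.mem_singleton_iff]
        constructor
        · rintro ⟨h1, h2⟩; exact ⟨h2, by rw [← h1, h2]⟩
        · rintro ⟨h1, h2⟩; exact ⟨by rw [h1, h2], h1⟩
      have hs : MeasurableSet {g : ℕ → Fin n | g r = v} := by
        show MeasurableSet ((fun g : ℕ → Fin n => g r) ⁻¹' {v})
        exact (measurable_pi_apply r) (measurableSet_singleton v)
      have ht : MeasurableSet {g : ℕ → Fin n | g s = v} := by
        show MeasurableSet ((fun g : ℕ → Fin n => g s) ⁻¹' {v})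
        exact (measurable_pi_apply s) (measurableSet_singleton v)
      have hmul := hindep.measure_inter_preimage_eq_mul _ _ hs ht
      rw [hset, hmul]
      have e1 : (fun ω => (fun i => W₁ i ω)) ⁻¹' {g : ℕ → Fin n | g r = v}
          = {ω | W₁ r ω = v} := rfl
      have e2 : (fun ω => (fun i => W₂ i ω)) ⁻¹' {g : ℕ → Fin n | g s = v}
          = {ω | W₂ s ω = v} := rfl
      rw [e1, e2, NBRWaux.marginal μ G W₁ hn hk hreg hW₁ r v,
        NBRWaux.marginal μ G W₂ hn hk hreg hW₂ s v]
    rw [hpart, Finset.sum_congr rfl (fun v _ => hterm v), Finset.sum_const, Finset.card_univ,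
      Fintype.card_fin, nsmul_eq_mul, ← mul_assoc,
      ENNReal.mul_inv_cancel (by exact_mod_cast (by omega : n ≠ 0)) (ENNReal.natCast_ne_top _),
      one_mul]
    have hn' : (0:ℝ) < n := by exact_mod_cast hn
    have e3 : ((n : ℕ) : ℝ≥0∞)⁻¹ = ENNReal.ofReal (1 / (n : ℝ)) := by
      rw [one_div, ENNReal.ofReal_inv_of_pos hn', ENNReal.ofReal_natCast]
    rw [e3]
    apply ENNReal.ofReal_le_ofReal
    rw [div_le_div_iff_of_pos_right hn'] -- maybe wrong name
    nlinarith [one_div_pos.mpr hn']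
end
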